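/- arXiv:2305.02771 — 3 statements merged into one kernel-verified Lean document; each statement's English description precedes it below -/
import Mathlib

section
/- Let (X, D) be a locally compact, complete metric space, α > 1, and Ω ⊆ X an open set with D_α(Ω) ≠ ∅. Let (d_n)_{n∈ℕ} ⊆ D_α(Ω) and d ∈ D_α(Ω). Suppose the functionals F_{d_n} Γ-converge to F_d on Lip(Ω) with the topology of uniform convergence on compact subsets of Ω, i.e.: (liminf) for every sequence (u_n) ⊆ Lip(Ω) converging to u ∈ Lip(Ω) uniformly on compact sets one has F_d(u) ≤ liminf_n F_{d_n}(u_n); (limsup) for every u ∈ Lip(Ω) there exists (u_n) ⊆ Lip(Ω) converging to u uniformly on compact sets with limsup_n F_{d_n}(u_n) ≤ F_d(u). Then d_n → d uniformly on compact subsets of Ω × Ω. -/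
open Filter MeasureTheory Set
open scoped ENNReal Topology

/-- Length of the curve `γ` on the interval `[a, b]`, with respect to the
(candidate) distance `d`, defined as a supremum over finite partitions. -/
noncomputable def pathLengthOn {E : Type*} (d : E → E → ℝ) (γ : ℝ → E) (a b : ℝ) : ℝ≥0∞ :=
  ⨆ (k : ℕ) (t : Fin (k + 1) → ℝ) (_ : Monotone t) (_ : t 0 = a) (_ : t (Fin.last k) = b),
    ∑ i : Fin k, ENNReal.ofReal (d (γ (t i.succ)) (γ (t i.castSucc)))

/-- Length of the curve `γ : [0,1] → E` with respect to `d`. -/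
noncomputable def pathLength {E : Type*} (d : E → E → ℝ) (γ : ℝ → E) : ℝ≥0∞ :=
  pathLengthOn d γ 0 1

/-- `d` is a distance on `E`. -/
def IsDistance {E : Type*} (d : E → E → ℝ) : Prop :=
  (∀ x y, d x y = d y x) ∧ (∀ x y z, d x z ≤ d x y + d y z) ∧ ∀ x y, d x y = 0 ↔ x = y

/-- `γ : [0,1] → E` is a Lipschitz curve with respect to `d`. -/
def LipCurve {E : Type*} (d : E → E → ℝ) (γ : ℝ → E) : Prop :=
  ∃ K : ℝ, ∀ s ∈ Icc (0 : ℝ) 1, ∀ t ∈ Icc (0 : ℝ) 1, d (γ s) (γ t) ≤ K * |s - t|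

/-- `(E, d)` is a length space: `d x y` is the infimum of lengths of Lipschitz
curves `γ : [0,1] → E` joining `x` to `y`. -/
def IsLengthDist {E : Type*} (d : E → E → ℝ) : Prop :=
  ∀ x y : E, ENNReal.ofReal (d x y) =
    ⨅ (γ : ℝ → E) (_ : LipCurve d γ) (_ : γ 0 = x) (_ : γ 1 = y), pathLength d γ

/-- `d ∈ 𝒟_α(Ω)` : `d` is a distance on `Ω` making it a length space and satisfying
`α⁻¹ D ≤ d ≤ α D`. -/
def MemD {X : Type*} [MetricSpace X] (α : ℝ) (Ω : Set X) (d : Ω → Ω → ℝ) : Prop :=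
  IsDistance d ∧ IsLengthDist d ∧
    ∀ x y : Ω, α⁻¹ * dist (x : X) (y : X) ≤ d x y ∧ d x y ≤ α * dist (x : X) (y : X)

/-- Uniform convergence `dn → d` on compact subsets of `E × E`. -/
def TendstoUnifCompactly {E : Type*} [TopologicalSpace E]
    (dn : ℕ → E → E → ℝ) (d : E → E → ℝ) : Prop :=
  ∀ K : Set (E × E), IsCompact K → ∀ ε : ℝ, 0 < ε →
    ∃ N : ℕ, ∀ n ≥ N, ∀ p ∈ K, |dn n p.1 p.2 - d p.1 p.2| < ε

/-- `e` is a continuous extension of `d : Ω → Ω → ℝ` to the closure of `Ω`. -/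
def IsContExt {X : Type*} [MetricSpace X] (Ω : Set X) (d : Ω → Ω → ℝ)
    (e : closure Ω → closure Ω → ℝ) : Prop :=
  Continuous (fun p : closure Ω × closure Ω => e p.1 p.2) ∧
    ∀ x y : Ω, e ⟨x, subset_closure x.2⟩ ⟨y, subset_closure y.2⟩ = d x y

/-- `(E, d)` is a geodesic space: any two points are joined by a constant-speed curve
`γ : [0,1] → E` whose length on each subinterval `[t,s]` equals `d (γ t) (γ s)`. -/
def IsGeodesicDist {E : Type*} (d : E → E → ℝ) : Prop :=
  ∀ x y : E, ∃ γ : ℝ → E, γ 0 = x ∧ γ 1 = y ∧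
    (∀ t s : ℝ, 0 ≤ t → t ≤ s → s ≤ 1 →
      pathLengthOn d γ t s = pathLength d γ * ENNReal.ofReal (s - t)) ∧
    ∀ t s : ℝ, 0 ≤ t → t ≤ s → s ≤ 1 →
      pathLengthOn d γ t s = ENNReal.ofReal (d (γ t) (γ s))

/-- Uniform convergence on `[0,1]` of a sequence of curves. -/
def UnifConvCurves {E : Type*} [MetricSpace E] (γn : ℕ → ℝ → E) (γ : ℝ → E) : Prop :=
  ∀ ε : ℝ, 0 < ε → ∃ N : ℕ, ∀ n ≥ N, ∀ t ∈ Icc (0 : ℝ) 1, dist (γn n t) (γ t) < ε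

/-- Γ-convergence of the length functionals `L_{dn}` to `L_d` on the space of
Lipschitz curves `[0,1] → E` with the topology of uniform convergence. -/
def GammaConvLengths {E : Type*} [MetricSpace E] (dn : ℕ → E → E → ℝ) (d : E → E → ℝ) : Prop :=
  (∀ (γn : ℕ → ℝ → E) (γ : ℝ → E),
      (∀ n, LipCurve (fun x y : E => dist x y) (γn n)) →
      LipCurve (fun x y : E => dist x y) γ → UnifConvCurves γn γ →
      pathLength d γ ≤ liminf (fun n => pathLength (dn n) (γn n)) atTop) ∧
  ∀ γ : ℝ → E, LipCurve (fun x y : E => dist x y) γ →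
    ∃ γn : ℕ → ℝ → E, (∀ n, LipCurve (fun x y : E => dist x y) (γn n)) ∧
      UnifConvCurves γn γ ∧
      limsup (fun n => pathLength (dn n) (γn n)) atTop ≤ pathLength d γ

/-- The functional `F_d`: `0` on `1`-Lipschitz functions (w.r.t. `d`), `+∞` otherwise. -/
noncomputable def Ffun {E : Type*} (d : E → E → ℝ) (u : E → ℝ) : ℝ≥0∞ := by
  classical exact if ∀ x y : E, |u x - u y| ≤ d x y then 0 else ⊤

/-- Uniform convergence on compact subsets of `E` for real-valued functions. -/
def UnifConvCompactsFun {E : Type*} [TopologicalSpace E] (un : ℕ → E → ℝ) (u : E → ℝ) : Prop :=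
  ∀ K : Set E, IsCompact K → ∀ ε : ℝ, 0 < ε →
    ∃ N : ℕ, ∀ n ≥ N, ∀ x ∈ K, |un n x - u x| < ε

/-- `u` is a real-valued Lipschitz function on the metric space `E`. -/
def IsLipFun {E : Type*} [MetricSpace E] (u : E → ℝ) : Prop :=
  ∃ K : NNReal, LipschitzWith K u

open Filter Set Metric TopologicalSpace

lemma sep_of_chain {X : Type*} [MetricSpace X] [LocallyCompactSpace X]
    (Ω : Set X) (hΩ : IsOpen Ω) (x₀ : X) (hx₀ : x₀ ∈ Ω)
    (hconn : ∀ z ∈ Ω, ∃ s : Set X, IsPreconnected s ∧ s ⊆ Ω ∧ x₀ ∈ s ∧ z ∈ s) :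
    TopologicalSpace.IsSeparable Ω := by
  classical
  set A : X → Set ℝ := fun z => {r | r ∈ Icc (0:ℝ) 1 ∧ IsCompact (closedBall z r) ∧ closedBall z r ⊆ Ω} with hA
  have hA0 : ∀ z ∈ Ω, (0:ℝ) ∈ A z := by
    intro z hz
    refine ⟨⟨le_refl 0, zero_le_one⟩, ?_, ?_⟩ <;> rw [closedBall_zero]
    · exact isCompact_singleton
    · simpa using hz
  have hAbdd : ∀ z, BddAbove (A z) := fun z => ⟨1, fun r hr => hr.1.2⟩
  set R : X → ℝ := fun z => sSup (A z) with hR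
  have hR0 : ∀ z ∈ Ω, 0 ≤ R z := fun z hz => le_csSup (hAbdd z) (hA0 z hz)
  have hR1 : ∀ z ∈ Ω, R z ≤ 1 := fun z hz => csSup_le ⟨0, hA0 z hz⟩ (fun r hr => hr.1.2)
  have hRpos : ∀ z ∈ Ω, 0 < R z := by
    intro z hz
    obtain ⟨C, hC1, hC2, hC3⟩ := local_compact_nhds (hΩ.mem_nhds hz)
    obtain ⟨ε, hε, hballC⟩ := Metric.mem_nhds_iff.1 hC1
    have hmem : min (ε/2) 1 ∈ A z := by
      have hsub : closedBall z (min (ε/2) 1) ⊆ C := by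
        refine subset_trans (closedBall_subset_ball ?_) hballC
        exact lt_of_le_of_lt (min_le_left _ _) (by linarith)
      refine ⟨⟨le_min (by positivity) zero_le_one, min_le_right _ _⟩,
        hC3.of_isClosed_subset isClosed_closedBall hsub, hsub.trans hC2⟩
    exact lt_of_lt_of_le (by positivity) (le_csSup (hAbdd z) hmem)
  have hball : ∀ z ∈ Ω, ∀ s : ℝ, 0 ≤ s → s < R z →
      IsCompact (closedBall z s) ∧ closedBall z s ⊆ Ω := by
    intro z hz s hs0 hs
    obtain ⟨r, hrA, hsr⟩ := exists_lt_of_lt_csSup ⟨0, hA0 z hz⟩ hs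
    have hsub : closedBall z s ⊆ closedBall z r := closedBall_subset_closedBall hsr.le
    exact ⟨hrA.2.1.of_isClosed_subset isClosed_closedBall hsub, hsub.trans hrA.2.2⟩
  have hlip : ∀ z ∈ Ω, ∀ w ∈ Ω, min 1 (R z - dist z w) ≤ R w := by
    intro z hz w hw
    rcases le_or_gt (R z - dist z w) 0 with h | h
    · exact le_trans (le_trans (min_le_right _ _) h) (hR0 w hw)
    · refine le_of_forall_lt (fun c₀ hc => ?_)
      rcases le_or_gt c₀ 0 with hc0' | hc0'
      · exact lt_of_le_of_lt hc0' (hRpos w hw)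
      obtain ⟨c, hcc', hc⟩ := exists_between hc
      have hc0 : 0 < c := lt_trans hc0' hcc'
      have hc1 : c < 1 := lt_of_lt_of_le hc (min_le_left _ _)
      have hc2 : c + dist z w < R z := by
        have := lt_of_lt_of_le hc (min_le_right _ _); linarith
      have hcb := hball z hz (c + dist z w) (by positivity) hc2
      have hsub : closedBall w c ⊆ closedBall z (c + dist z w) := by
        intro p hp
        rw [mem_closedBall] at hp ⊢
        calc dist p z ≤ dist p w + dist w z := dist_triangle _ _ _
          _ ≤ c + dist z w := by rw [dist_comm w z]; linarith
      have hmem : c ∈ A w :=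
        ⟨⟨hc0.le, hc1.le⟩, hcb.1.of_isClosed_subset isClosed_closedBall hsub, hsub.trans hcb.2⟩
      exact lt_of_lt_of_le hcc' (le_csSup (hAbdd w) hmem)
  set K : ℕ → Set X := fun n => Nat.rec ({x₀} : Set X)
    (fun _ Kn => closure (⋃ z ∈ Kn, closedBall z (R z / 4))) n with hK
  have hK0 : K 0 = {x₀} := rfl
  have hKsucc : ∀ n, K (n+1) = closure (⋃ z ∈ K n, closedBall z (R z / 4)) := fun n => rfl
  have hKcpt : ∀ n, IsCompact (K n) ∧ K n ⊆ Ω := by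
    intro n
    induction n with
    | zero => exact ⟨isCompact_singleton, by rw [hK0]; exact singleton_subset_iff.2 hx₀⟩
    | succ n ih =>
      obtain ⟨hc, hsub⟩ := ih
      have hcover : K n ⊆ ⋃ z : K n, ball (z : X) (R (z : X) / 8) := by
        intro z hz
        exact mem_iUnion.2 ⟨⟨z, hz⟩, mem_ball_self (by have := hRpos z (hsub hz); linarith)⟩
      obtain ⟨t, ht⟩ := hc.elim_finite_subcover
        (fun z : K n => ball (z : X) (R (z : X) / 8)) (fun z => isOpen_ball) hcover
      set C := ⋃ z ∈ t, closedBall (z : X) (13 * R (z : X) / 32) with hC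
      have haux : ∀ z : K n, IsCompact (closedBall (z : X) (13 * R (z : X) / 32)) ∧
          closedBall (z : X) (13 * R (z : X) / 32) ⊆ Ω := by
        intro z
        have hz := hsub z.2
        exact hball _ hz _ (by have := hR0 _ hz; linarith)
          (by have := hRpos _ hz; linarith)
      have hCc : IsCompact C := t.isCompact_biUnion (fun z _ => (haux z).1)
      have hCΩ : C ⊆ Ω := iUnion₂_subset fun z _ => (haux z).2
      have hsubC : (⋃ z ∈ K n, closedBall z (R z / 4)) ⊆ C := by
        intro w hw
        obtain ⟨z, hz, hw⟩ := mem_iUnion₂.1 hw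
        obtain ⟨i, hit, hzi⟩ := mem_iUnion₂.1 (ht hz)
        rw [mem_ball] at hzi
        have hzΩ := hsub hz
        have hiΩ := hsub i.2
        have hRzi : R z - dist z (i : X) ≤ R (i : X) := by
          have h := hlip z hzΩ (i : X) hiΩ
          rwa [min_eq_right (by have := hR1 z hzΩ; have := dist_nonneg (x := z) (y := (i:X)); linarith)] at h
        refine mem_iUnion₂.2 ⟨i, hit, ?_⟩
        rw [mem_closedBall] at hw ⊢
        have hd : dist w (i : X) ≤ dist w z + dist z (i : X) := dist_triangle _ _ _
        have h0 : 0 ≤ dist z (i : X) := dist_nonneg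
        linarith
      have hclosC : closure (⋃ z ∈ K n, closedBall z (R z / 4)) ⊆ C :=
        closure_minimal hsubC hCc.isClosed
      rw [hKsucc n]
      exact ⟨hCc.of_isClosed_subset isClosed_closure hclosC, hclosC.trans hCΩ⟩
  set G : Set X := ⋃ n, K n with hG
  have hsubG : ∀ n, ∀ z ∈ K n, ball z (R z / 4) ⊆ G := by
    intro n z hz
    refine subset_trans ?_ (subset_iUnion K (n+1))
    rw [hKsucc n]
    exact (ball_subset_closedBall).trans
      ((subset_iUnion₂ (s := fun z _ => closedBall z (R z / 4)) z hz).trans subset_closure)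
  have hGΩ : G ⊆ Ω := iUnion_subset fun n => (hKcpt n).2
  have hGopen : IsOpen G := by
    rw [Metric.isOpen_iff]
    intro z hz
    obtain ⟨n, hzn⟩ := mem_iUnion.1 hz
    exact ⟨R z / 4, by have := hRpos z (hGΩ hz); linarith, hsubG n z hzn⟩
  have hGcl : ∀ w ∈ Ω, w ∈ closure G → w ∈ G := by
    intro w hw hwc
    obtain ⟨q, hqG, hqd⟩ := Metric.mem_closure_iff.1 hwc (R w / 8)
      (by have := hRpos w hw; linarith)
    obtain ⟨n, hqn⟩ := mem_iUnion.1 hqG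
    have hqΩ : q ∈ Ω := hGΩ hqG
    have hRq : R w - dist w q ≤ R q := by
      have h := hlip w hw q hqΩ
      rwa [min_eq_right (by have := hR1 w hw; have := dist_nonneg (x := w) (y := q); linarith)] at h
    have hwq : dist w q ≤ R q / 4 := by
      have := hR0 w hw; linarith
    have : w ∈ ball q (R q / 4) ∨ w ∈ closedBall q (R q / 4) := Or.inr (by
      rw [mem_closedBall]; exact hwq)
    refine subset_iUnion K (n+1) ?_
    rw [hKsucc n]
    refine subset_closure ?_
    exact mem_iUnion₂.2 ⟨q, hqn, by rw [mem_closedBall]; exact hwq⟩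
  have hx₀G : x₀ ∈ G := mem_iUnion.2 ⟨0, by rw [hK0]; exact rfl⟩
  have hΩG : Ω ⊆ G := by
    intro z hz
    by_contra hzG
    obtain ⟨s, hsp, hsΩ, hx0s, hzs⟩ := hconn z hz
    have hcover : s ⊆ G ∪ (Ω ∩ (closure G)ᶜ) := by
      intro w hws
      by_cases hwc : w ∈ closure G
      · exact Or.inl (hGcl w (hsΩ hws) hwc)
      · exact Or.inr ⟨hsΩ hws, hwc⟩
    have hzc : z ∉ closure G := fun h => hzG (hGcl z hz h)
    obtain ⟨w, hws, hwG, _, hwc⟩ := hsp G (Ω ∩ (closure G)ᶜ) hGopen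
      (hΩ.inter isClosed_closure.isOpen_compl) hcover ⟨x₀, hx0s, hx₀G⟩ ⟨z, hzs, hz, hzc⟩
    exact hwc (subset_closure hwG)
  refine IsSeparable.mono ?_ hΩG
  exact TopologicalSpace.IsSeparable.iUnion (fun n => (hKcpt n).1.isSeparable)
section Aux
open Metric

variable {X : Type*} [MetricSpace X] {Ω : Set X} {α : ℝ} {d : Ω → Ω → ℝ}

lemma memD_nonneg (hα : 1 < α) (hd : MemD α Ω d) (x y : Ω) : 0 ≤ d x y := by
  have h := (hd.2.2 x y).1
  have h2 : (0:ℝ) ≤ α⁻¹ * dist (x:X) (y:X) := by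
    have : (0:ℝ) < α := lt_trans zero_lt_one hα
    positivity
  linarith

lemma memD_self (hd : MemD α Ω d) (x : Ω) : d x x = 0 := (hd.1.2.2 x x).2 rfl

lemma memD_abs (hd : MemD α Ω d) (x z w : Ω) : |d x z - d x w| ≤ d z w := by
  rw [abs_sub_le_iff]
  constructor
  · have h1 := hd.1.2.1 x w z
    have h2 := hd.1.1 w z
    linarith
  · have h1 := hd.1.2.1 x z w
    linarith

lemma memD_ub (hd : MemD α Ω d) (x y : Ω) : d x y ≤ α * dist x y := by
  rw [Subtype.dist_eq]; exact (hd.2.2 x y).2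

lemma memD_lip2 (hd : MemD α Ω d) (a b a' b' : Ω) :
    |d a b - d a' b'| ≤ α * (dist a a' + dist b b') := by
  have tri : ∀ p q p' q' : Ω, d p q - d p' q' ≤ d p p' + d q' q := by
    intro p q p' q'
    have h1 := hd.1.2.1 p p' q
    have h2 := hd.1.2.1 p' q' q
    linarith
  have hsymm := hd.1.1
  have h1 := tri a b a' b'
  have h2 := tri a' b' a b
  have u1 := memD_ub hd a a'
  have u2 : d b' b ≤ α * dist b b' := by
    rw [dist_comm b b']; exact memD_ub hd b' b
  have u3 : d a' a ≤ α * dist a a' := by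
    rw [dist_comm a a']; exact memD_ub hd a' a
  have u4 := memD_ub hd b b'
  have hexp : α * (dist a a' + dist b b') = α * dist a a' + α * dist b b' := by ring
  have e1 : dist b' b = dist b b' := dist_comm _ _
  have e2 : dist a' a = dist a a' := dist_comm _ _
  rw [abs_sub_le_iff]
  constructor
  · linarith
  · linarith

lemma Ffun_eq_zero {E : Type*} {d' : E → E → ℝ} {u : E → ℝ}
    (h : ∀ x y, |u x - u y| ≤ d' x y) : Ffun d' u = 0 := by
  simp only [Ffun]
  rw [if_pos h]

lemma Ffun_prop {E : Type*} {d' : E → E → ℝ} {u : E → ℝ}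
    (h : Ffun d' u ≤ 0) : ∀ x y, |u x - u y| ≤ d' x y := by
  by_contra hc
  simp only [Ffun] at h
  rw [if_neg hc] at h
  simp at h

end Aux
lemma Ffun_prop' {E : Type*} {d' : E → E → ℝ} {u : E → ℝ}
    (h : Ffun d' u ≠ ⊤) : ∀ x y, |u x - u y| ≤ d' x y := by
  by_contra hc
  simp only [Ffun] at h
  rw [if_neg hc] at h
  exact h rfl

section LB
variable {X : Type*} [MetricSpace X] {Ω : Set X} {α : ℝ}

lemma memD_isLipFun (hα : 1 < α) {d : Ω → Ω → ℝ} (hd : MemD α Ω d) (x : Ω) :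
    IsLipFun (fun z => d x z) := by
  refine ⟨α.toNNReal, LipschitzWith.of_dist_le_mul (fun z w => ?_)⟩
  rw [Real.dist_eq, Real.coe_toNNReal α (by linarith)]
  exact le_trans (memD_abs hd x z w) (memD_ub hd z w)

lemma lower_bound (hα : 1 < α)
    {dn : ℕ → Ω → Ω → ℝ} (hdn : ∀ n, MemD α Ω (dn n))
    {d : Ω → Ω → ℝ} (hd : MemD α Ω d)
    (hlimsup : ∀ u : Ω → ℝ, IsLipFun u →
      ∃ un : ℕ → Ω → ℝ, (∀ n, IsLipFun (un n)) ∧ UnifConvCompactsFun un u ∧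
        limsup (fun n => Ffun (dn n) (un n)) atTop ≤ Ffun d u)
    (x y : Ω) (ε : ℝ) (hε : 0 < ε) :
    ∃ N, ∀ n ≥ N, d x y - ε < dn n x y := by
  obtain ⟨un, hunlip, hunconv, hunsup⟩ := hlimsup (fun z => d x z) (memD_isLipFun hα hd x)
  have hF0 : Ffun d (fun z => d x z) = 0 := Ffun_eq_zero (fun z w => memD_abs hd x z w)
  rw [hF0] at hunsup
  have hev : ∀ᶠ n in atTop, Ffun (dn n) (un n) < 1 :=
    eventually_lt_of_limsup_lt (lt_of_le_of_lt hunsup (by norm_num))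
  obtain ⟨N₂, hN₂⟩ := eventually_atTop.1 hev
  obtain ⟨N₁, hN₁⟩ := hunconv {x, y} (Set.Finite.isCompact (by simp)) (ε/2) (by linarith)
  refine ⟨max N₁ N₂, fun n hn => ?_⟩
  have hprop : ∀ z w, |un n z - un n w| ≤ dn n z w :=
    Ffun_prop' (fun h => by
      have := hN₂ n (le_trans (le_max_right _ _) hn)
      rw [h] at this
      exact absurd this (by simp))
  have hx := hN₁ n (le_trans (le_max_left _ _) hn) x (by simp)
  have hy := hN₁ n (le_trans (le_max_left _ _) hn) y (by simp)
  have h1 := hprop x y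
  have h2 : un n y - un n x ≤ |un n x - un n y| := by
    rw [abs_sub_comm]; exact le_abs_self _
  have hxx : d x x = 0 := memD_self hd x
  simp only [] at hx hy
  rw [hxx] at hx
  have hx' := abs_lt.1 hx
  have hy' := abs_lt.1 hy
  simp only [sub_zero] at hx'
  obtain ⟨hx1, hx2⟩ := hx'
  obtain ⟨hy1, hy2⟩ := hy'
  linarith
end LB
section UB
open Metric TopologicalSpace

variable {X : Type*} [MetricSpace X] [LocallyCompactSpace X] [CompleteSpace X]

lemma upper_bound {Ω : Set X} (hΩ : IsOpen Ω) {α : ℝ} (hα : 1 < α)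
    {dn : ℕ → Ω → Ω → ℝ} (hdn : ∀ n, MemD α Ω (dn n))
    {d : Ω → Ω → ℝ} (hd : MemD α Ω d)
    (hliminf : ∀ (un : ℕ → Ω → ℝ) (u : Ω → ℝ), (∀ n, IsLipFun (un n)) → IsLipFun u →
      UnifConvCompactsFun un u →
      Ffun d u ≤ liminf (fun n => Ffun (dn n) (un n)) atTop)
    (x y : Ω) (ε : ℝ) (hε : 0 < ε) :
    ∃ N, ∀ n ≥ N, dn n x y < d x y + ε := by
  classical
  have hα0 : (0:ℝ) < α := lt_trans zero_lt_one hα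
  by_contra hcon
  push_neg at hcon
  obtain ⟨φ, hφmono, hφ⟩ := Filter.extraction_of_frequently_atTop
    (frequently_atTop.2 fun N => by obtain ⟨n, hn1, hn2⟩ := hcon N; exact ⟨n, hn1, hn2⟩)
  -- path-connectedness of Ω through the length structure of d
  have hconn : ∀ z ∈ Ω, ∃ s : Set X, IsPreconnected s ∧ s ⊆ Ω ∧ (x:X) ∈ s ∧ z ∈ s := by
    intro z hz
    obtain ⟨γ, hγlip, hγ0, hγ1⟩ : ∃ γ : ℝ → Ω, LipCurve d γ ∧ γ 0 = x ∧ γ 1 = ⟨z, hz⟩ := by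
      by_contra hno
      push_neg at hno
      have hlen := hd.2.1 x ⟨z, hz⟩
      have htop : (⨅ (γ : ℝ → Ω) (_ : LipCurve d γ) (_ : γ 0 = x) (_ : γ 1 = ⟨z, hz⟩),
          pathLength d γ) = ⊤ := by
        rw [iInf_eq_top]; intro γ
        rw [iInf_eq_top]; intro h1
        rw [iInf_eq_top]; intro h2
        rw [iInf_eq_top]; intro h3
        exact absurd h3 (hno γ h1 h2)
      rw [htop] at hlen
      exact ENNReal.ofReal_ne_top hlen
    obtain ⟨K, hK⟩ := hγlip
    have hcont : ContinuousOn (fun s => ((γ s : Ω) : X)) (Icc (0:ℝ) 1) := by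
      have hlipOn : LipschitzOnWith (α * max K 0).toNNReal
          (fun s => ((γ s : Ω) : X)) (Icc (0:ℝ) 1) := by
        rw [lipschitzOnWith_iff_dist_le_mul]
        intro s hs r hr
        have h1 := hK s hs r hr
        have h2 := (hd.2.2 (γ s) (γ r)).1
        rw [Real.coe_toNNReal _ (by positivity)]
        have h3 : dist ((γ s : Ω) : X) ((γ r : Ω) : X) ≤ α * d (γ s) (γ r) := by
          have h4 := mul_le_mul_of_nonneg_left h2 hα0.le
          have h5 : α * (α⁻¹ * dist ((γ s : Ω) : X) ((γ r : Ω) : X))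
              = dist ((γ s : Ω) : X) ((γ r : Ω) : X) := by
            field_simp
          linarith
        have h6 : K * |s - r| ≤ max K 0 * |s - r| :=
          mul_le_mul_of_nonneg_right (le_max_left _ _) (abs_nonneg _)
        have h7 : dist s r = |s - r| := Real.dist_eq s r
        calc dist ((γ s : Ω) : X) ((γ r : Ω) : X) ≤ α * d (γ s) (γ r) := h3
          _ ≤ α * (max K 0 * |s - r|) := by
              have := le_trans h1 h6
              exact mul_le_mul_of_nonneg_left this hα0.le
          _ = α * max K 0 * dist s r := by rw [h7]; ring
      exact hlipOn.continuousOn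
    refine ⟨(fun s => ((γ s : Ω) : X)) '' Icc 0 1,
      isPreconnected_Icc.image _ hcont, ?_, ?_, ?_⟩
    · rintro w ⟨s, _, rfl⟩; exact (γ s).2
    · exact ⟨0, ⟨le_refl 0, zero_le_one⟩, by simp only []; rw [hγ0]⟩
    · exact ⟨1, ⟨zero_le_one, le_refl 1⟩, by simp only []; rw [hγ1]⟩
  have hsep : IsSeparable Ω := sep_of_chain Ω hΩ (x : X) x.2 hconn
  haveI : Nonempty (↥Ω) := ⟨x⟩
  haveI : SeparableSpace (↥Ω) := hsep.separableSpace
  obtain ⟨S, hSc, hSd⟩ := exists_countable_dense (↥Ω)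
  obtain ⟨t, hSt⟩ := hSc.exists_eq_range hSd.nonempty
  set f : ℕ → Ω → ℝ := fun k z => dn (φ k) x z with hfdef
  have hfbd : ∀ (k : ℕ) (z : Ω), f k z ∈ Icc (0:ℝ) (α * dist x z) :=
    fun k z => ⟨memD_nonneg hα (hdn _) x z, memD_ub (hdn _) x z⟩
  have hcpt : IsCompact (Set.pi univ fun i : ℕ => Icc (0:ℝ) (α * dist x (t i))) :=
    isCompact_univ_pi fun i => isCompact_Icc
  obtain ⟨g, hgmem, ψ, hψmono, hψconv⟩ := hcpt.tendsto_subseq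
    (x := fun k => (fun i => f k (t i)))
    (fun k => by rw [Set.mem_univ_pi]; exact fun i => hfbd k (t i))
  have htconv : ∀ i, Tendsto (fun j => f (ψ j) (t i)) atTop (𝓝 (g i)) := by
    intro i
    have := tendsto_pi_nhds.1 hψconv i
    simpa [Function.comp] using this
  have hflip : ∀ (k : ℕ) (z w : Ω), |f k z - f k w| ≤ α * dist z w :=
    fun k z w => le_trans (memD_abs (hdn _) x z w) (memD_ub (hdn _) z w)
  have hdense : ∀ (z : Ω) (r : ℝ), 0 < r → ∃ i, dist z (t i) < r := by
    intro z r hr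
    obtain ⟨w, hwS, hwd⟩ := Metric.mem_closure_iff.1 (hSd z) r hr
    rw [hSt] at hwS; obtain ⟨i, rfl⟩ := hwS
    exact ⟨i, hwd⟩
  have hcauchy : ∀ z : Ω, CauchySeq (fun j => f (ψ j) z) := by
    intro z
    rw [Metric.cauchySeq_iff]
    intro r hr
    obtain ⟨i, hi⟩ := hdense z (r / (4 * α)) (by positivity)
    obtain ⟨N, hN⟩ := Metric.cauchySeq_iff.1 (htconv i).cauchySeq (r/2) (by linarith)
    refine ⟨N, fun a ha b hb => ?_⟩
    have h1 := hflip (ψ a) z (t i)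
    have h2 := hflip (ψ b) z (t i)
    have h3 := hN a ha b hb
    rw [Real.dist_eq] at h3 ⊢
    have habs1 : |f (ψ a) z - f (ψ b) z| ≤ |f (ψ a) z - f (ψ a) (t i)|
        + |f (ψ a) (t i) - f (ψ b) (t i)| + |f (ψ b) (t i) - f (ψ b) z| := by
      have e1 := abs_sub_le (f (ψ a) z) (f (ψ a) (t i)) (f (ψ b) z)
      have e2 := abs_sub_le (f (ψ a) (t i)) (f (ψ b) (t i)) (f (ψ b) z)
      linarith
    have h4 : |f (ψ b) (t i) - f (ψ b) z| ≤ α * dist z (t i) := by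
      rw [abs_sub_comm]; exact h2
    have h5 : α * dist z (t i) < α * (r / (4 * α)) := (mul_lt_mul_iff_right₀ hα0).2 hi
    have h6 : α * (r / (4 * α)) = r / 4 := by field_simp
    linarith
  have hex : ∀ z : Ω, ∃ L, Tendsto (fun j => f (ψ j) z) atTop (𝓝 L) :=
    fun z => cauchySeq_tendsto_of_complete (hcauchy z)
  choose u hu using hex
  have hulip : ∀ z w : Ω, |u z - u w| ≤ α * dist z w := by
    intro z w
    exact le_of_tendsto (((hu z).sub (hu w)).abs)
      (Eventually.of_forall fun j => hflip (ψ j) z w)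
  have hIsLipu : IsLipFun u := by
    refine ⟨α.toNNReal, LipschitzWith.of_dist_le_mul fun z w => ?_⟩
    rw [Real.dist_eq, Real.coe_toNNReal _ (by linarith)]
    exact hulip z w
  have hunif : ∀ K : Set Ω, IsCompact K → ∀ r : ℝ, 0 < r →
      ∃ N, ∀ j ≥ N, ∀ z ∈ K, |f (ψ j) z - u z| < r := by
    intro K hK r hr
    have hδ0 : 0 < r / (8 * α) := by positivity
    have hcov : K ⊆ ⋃ z : K, ball (z : Ω) (r / (8 * α)) :=
      fun z hz => mem_iUnion.2 ⟨⟨z, hz⟩, mem_ball_self hδ0⟩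
    obtain ⟨T, hT⟩ := hK.elim_finite_subcover
      (fun z : K => ball (z : Ω) (r / (8 * α))) (fun z => isOpen_ball) hcov
    choose iT hiT using fun z : K => hdense (z : Ω) (r / (8 * α)) hδ0
    have hNz : ∀ z : K, ∃ N, ∀ j ≥ N, |f (ψ j) (t (iT z)) - u (t (iT z))| < r / (8 * α) := by
      intro z
      obtain ⟨N, hN⟩ := Metric.tendsto_atTop.1 (hu (t (iT z))) (r / (8 * α)) hδ0
      exact ⟨N, fun j hj => by have := hN j hj; rwa [Real.dist_eq] at this⟩
    choose Nf hNf using hNz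
    refine ⟨T.sup Nf, fun j hj z hz => ?_⟩
    obtain ⟨zc, hzcT, hzc⟩ := mem_iUnion₂.1 (hT hz)
    rw [mem_ball] at hzc
    have hp := hNf zc j (le_trans (Finset.le_sup hzcT) hj)
    have hdzp : dist z (t (iT zc)) < 2 * (r / (8 * α)) :=
      lt_of_le_of_lt (dist_triangle z (zc : Ω) (t (iT zc)))
        (by have := hiT zc; linarith)
    have e1 : |f (ψ j) z - f (ψ j) (t (iT zc))| ≤ α * dist z (t (iT zc)) := hflip _ _ _
    have e3 : |u (t (iT zc)) - u z| ≤ α * dist z (t (iT zc)) := by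
      rw [abs_sub_comm]; exact hulip z (t (iT zc))
    have habs : |f (ψ j) z - u z| ≤ |f (ψ j) z - f (ψ j) (t (iT zc))|
        + |f (ψ j) (t (iT zc)) - u (t (iT zc))| + |u (t (iT zc)) - u z| := by
      have a1 := abs_sub_le (f (ψ j) z) (f (ψ j) (t (iT zc))) (u z)
      have a2 := abs_sub_le (f (ψ j) (t (iT zc))) (u (t (iT zc))) (u z)
      linarith
    have hb : α * dist z (t (iT zc)) < α * (2 * (r / (8 * α))) :=
      (mul_lt_mul_iff_right₀ hα0).2 hdzp
    have hb2 : α * (2 * (r / (8 * α))) = r / 4 := by field_simp; ring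
    have hd8 : r / (8 * α) ≤ r / 8 :=
      div_le_div_of_nonneg_left hr.le (by norm_num) (by linarith)
    linarith
  set m : ℕ → ℕ := fun j => φ (ψ j) with hmdef
  have hmmono : StrictMono m := hφmono.comp hψmono
  set un : ℕ → Ω → ℝ := fun n => if h : ∃ j, m j = n then (fun z => dn n x z) else u
    with hundef
  have hunlip : ∀ n, IsLipFun (un n) := by
    intro n
    simp only [hundef]
    by_cases h : ∃ j, m j = n
    · rw [dif_pos h]; exact memD_isLipFun hα (hdn n) x
    · rw [dif_neg h]; exact hIsLipu
  have hconv2 : UnifConvCompactsFun un u := by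
    intro K hK r hr
    obtain ⟨N₁, hN₁⟩ := hunif K hK r hr
    refine ⟨m N₁, fun n hn z hz => ?_⟩
    simp only [hundef]
    by_cases h : ∃ j, m j = n
    · rw [dif_pos h]
      obtain ⟨j, rfl⟩ := h
      have hjN : N₁ ≤ j := hmmono.le_iff_le.1 hn
      exact hN₁ j hjN z hz
    · rw [dif_neg h]; simpa using hr
  have hliminf0 : liminf (fun n => Ffun (dn n) (un n)) atTop ≤ 0 := by
    apply liminf_le_of_frequently_le'
    rw [frequently_atTop]
    intro N
    refine ⟨m N, hmmono.le_apply, ?_⟩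
    have : un (m N) = fun z => dn (m N) x z := by
      simp only [hundef]; rw [dif_pos ⟨N, rfl⟩]
    rw [this, Ffun_eq_zero (fun z w => memD_abs (hdn _) x z w)]
  have hFd := hliminf un u hunlip hIsLipu hconv2
  have hprop := Ffun_prop (le_trans hFd hliminf0)
  have hux : u x = 0 := by
    have h0 : Tendsto (fun j => f (ψ j) x) atTop (𝓝 0) := by
      have he : (fun j => f (ψ j) x) = fun _ => (0:ℝ) :=
        funext fun j => memD_self (hdn _) x
      rw [he]; exact tendsto_const_nhds
    exact tendsto_nhds_unique (hu x) h0
  have huy : d x y + ε ≤ u y :=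
    ge_of_tendsto (hu y) (Eventually.of_forall fun j => hφ (ψ j))
  have hxy := hprop x y
  rw [hux] at hxy
  have habs : u y ≤ |(0:ℝ) - u y| := by rw [zero_sub, abs_neg]; exact le_abs_self _
  linarith

end UB
/-- Γ-convergence of the functionals `F_{dn}` to `F_d` implies uniform
convergence of the distances on compact subsets of `Ω × Ω`. -/
theorem stmt10 {X : Type*} [MetricSpace X] [LocallyCompactSpace X] [CompleteSpace X]
    (Ω : Set X) (hΩ : IsOpen Ω) (α : ℝ) (hα : 1 < α)
    (hne : ∃ d₀ : Ω → Ω → ℝ, MemD α Ω d₀)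
    (dn : ℕ → Ω → Ω → ℝ) (hdn : ∀ n, MemD α Ω (dn n))
    (d : Ω → Ω → ℝ) (hd : MemD α Ω d)
    (hliminf : ∀ (un : ℕ → Ω → ℝ) (u : Ω → ℝ), (∀ n, IsLipFun (un n)) → IsLipFun u →
      UnifConvCompactsFun un u →
      Ffun d u ≤ liminf (fun n => Ffun (dn n) (un n)) atTop)
    (hlimsup : ∀ u : Ω → ℝ, IsLipFun u →
      ∃ un : ℕ → Ω → ℝ, (∀ n, IsLipFun (un n)) ∧ UnifConvCompactsFun un u ∧
        limsup (fun n => Ffun (dn n) (un n)) atTop ≤ Ffun d u) :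
    TendstoUnifCompactly dn d := by
  have hα0 : (0:ℝ) < α := lt_trans zero_lt_one hα
  have hpt : ∀ (x y : Ω) (r : ℝ), 0 < r → ∃ N, ∀ n ≥ N, |dn n x y - d x y| < r := by
    intro x y r hr
    obtain ⟨N₁, hN₁⟩ := lower_bound hα hdn hd hlimsup x y r hr
    obtain ⟨N₂, hN₂⟩ := upper_bound hΩ hα hdn hd hliminf x y r hr
    refine ⟨max N₁ N₂, fun n hn => ?_⟩
    have h1 := hN₁ n (le_trans (le_max_left _ _) hn)
    have h2 := hN₂ n (le_trans (le_max_right _ _) hn)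
    rw [abs_lt]; constructor <;> linarith
  intro K hK ε hε
  have hδ0 : 0 < ε / (8 * α) := by positivity
  have hcov : K ⊆ ⋃ p : K, Metric.ball (p : Ω × Ω) (ε / (8 * α)) :=
    fun p hp => mem_iUnion.2 ⟨⟨p, hp⟩, Metric.mem_ball_self hδ0⟩
  obtain ⟨T, hT⟩ := hK.elim_finite_subcover
    (fun p : K => Metric.ball (p : Ω × Ω) (ε / (8 * α))) (fun _ => Metric.isOpen_ball) hcov
  have hNp : ∀ p : K, ∃ N, ∀ n ≥ N,
      |dn n (p : Ω × Ω).1 (p : Ω × Ω).2 - d (p : Ω × Ω).1 (p : Ω × Ω).2| < ε / 2 :=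
    fun p => hpt _ _ (ε / 2) (by linarith)
  choose Nf hNf using hNp
  refine ⟨T.sup Nf, fun n hn p hp => ?_⟩
  obtain ⟨q, hqT, hq⟩ := mem_iUnion₂.1 (hT hp)
  rw [Metric.mem_ball, Prod.dist_eq, max_lt_iff] at hq
  obtain ⟨hq1, hq2⟩ := hq
  have h0 := hNf q n (le_trans (Finset.le_sup hqT) hn)
  have e1 : |dn n p.1 p.2 - dn n (q : Ω × Ω).1 (q : Ω × Ω).2|
      ≤ α * (dist p.1 (q : Ω × Ω).1 + dist p.2 (q : Ω × Ω).2) := memD_lip2 (hdn n) _ _ _ _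
  have e2 : |d (q : Ω × Ω).1 (q : Ω × Ω).2 - d p.1 p.2|
      ≤ α * (dist p.1 (q : Ω × Ω).1 + dist p.2 (q : Ω × Ω).2) := by
    rw [abs_sub_comm]; exact memD_lip2 hd _ _ _ _
  have habs : |dn n p.1 p.2 - d p.1 p.2| ≤ |dn n p.1 p.2 - dn n (q : Ω × Ω).1 (q : Ω × Ω).2|
      + |dn n (q : Ω × Ω).1 (q : Ω × Ω).2 - d (q : Ω × Ω).1 (q : Ω × Ω).2|
      + |d (q : Ω × Ω).1 (q : Ω × Ω).2 - d p.1 p.2| := by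
    have a1 := abs_sub_le (dn n p.1 p.2) (dn n (q : Ω × Ω).1 (q : Ω × Ω).2) (d p.1 p.2)
    have a2 := abs_sub_le (dn n (q : Ω × Ω).1 (q : Ω × Ω).2) (d (q : Ω × Ω).1 (q : Ω × Ω).2)
      (d p.1 p.2)
    linarith
  have hb : α * (dist p.1 (q : Ω × Ω).1 + dist p.2 (q : Ω × Ω).2)
      < α * (2 * (ε / (8 * α))) := by
    apply (mul_lt_mul_iff_right₀ hα0).2; linarith
  have hb2 : α * (2 * (ε / (8 * α))) = ε / 4 := by field_simp; ring
  linarith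
end

section
/- Let Ω := (0,1)² ⊆ ℝ² and let d := 2·d_Eucl restricted to Ω × Ω, which belongs to D_2(Ω, d_Eucl). Then there exist a nondecreasing sequence (d_n)_{n∈ℕ} ⊆ D_2(Ω, d_Eucl) and a distance d̃ on Ω with d̃ ≠ d such that: (a) d_n → d̃ uniformly on compact subsets of Ω × Ω; and (b) L_{d_n} Γ-converges to L_d on Lip([0,1]; Ω) with the topology of uniform convergence, i.e. for every sequence of Lipschitz curves γⁿ : [0,1] → Ω converging uniformly to a Lipschitz curve γ : [0,1] → Ω one has L_d(γ) ≤ liminf_n L_{d_n}(γⁿ), and for every Lipschitz curve γ : [0,1] → Ω there exist Lipschitz curves γⁿ : [0,1] → Ω converging uniformly to γ with limsup_n L_{d_n}(γⁿ) ≤ L_d(γ). -/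
open Filter MeasureTheory Set
open scoped ENNReal Topology

section General

variable {E : Type*}

/-- extension of a Fin-indexed partition to ℕ -/
def pext {k : ℕ} (t : Fin (k + 1) → ℝ) : ℕ → ℝ :=
  fun n => if h : n ≤ k then t ⟨n, by omega⟩ else t (Fin.last k)

lemma pext_mono {k : ℕ} {t : Fin (k + 1) → ℝ} (ht : Monotone t) : Monotone (pext t) := by
  intro i j hij
  unfold pext
  split_ifs with h1 h2 h3
  · exact ht (by simp [Fin.le_def]; omega)
  · exact ht (by simp [Fin.le_def]; omega)
  · omega
  · exact le_refl _

lemma pext_castSucc {k : ℕ} (t : Fin (k + 1) → ℝ) (i : Fin k) :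
    pext t (i : ℕ) = t i.castSucc := by
  unfold pext
  rw [dif_pos (by omega)]
  congr 1

lemma pext_succ {k : ℕ} (t : Fin (k + 1) → ℝ) (i : Fin k) :
    pext t ((i : ℕ) + 1) = t i.succ := by
  unfold pext
  rw [dif_pos (by omega)]
  congr 1

lemma pext_zero {k : ℕ} (t : Fin (k + 1) → ℝ) : pext t 0 = t 0 := by
  unfold pext; rw [dif_pos (by omega)]; congr 1

lemma pext_top {k : ℕ} (t : Fin (k + 1) → ℝ) : pext t k = t (Fin.last k) := by
  unfold pext; rw [dif_pos (by omega)]; congr 1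

/-- telescoping sum -/
lemma telescope_fin {k : ℕ} (t : Fin (k + 1) → ℝ) :
    ∑ i : Fin k, (t i.succ - t i.castSucc) = t (Fin.last k) - t 0 := by
  have : ∀ i : Fin k, t i.succ - t i.castSucc
      = (fun n => pext t (n + 1) - pext t n) (i : ℕ) := by
    intro i; simp only [pext_succ, pext_castSucc]
  rw [Finset.sum_congr rfl (fun i _ => this i),
    Fin.sum_univ_eq_sum_range (fun n => pext t (n + 1) - pext t n) k,
    Finset.sum_range_sub (pext t), pext_top, pext_zero]

lemma partition_mem_Icc {k : ℕ} {t : Fin (k + 1) → ℝ} (ht : Monotone t) {a b : ℝ}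
    (h0 : t 0 = a) (hl : t (Fin.last k) = b) (i : Fin (k + 1)) : t i ∈ Icc a b :=
  ⟨h0 ▸ ht (Fin.zero_le i), hl ▸ ht (Fin.le_last i)⟩

/-- upper bound on pathLengthOn from a uniform modulus -/
lemma pathLengthOn_le_mul {d : E → E → ℝ} {γ : ℝ → E} {a b c : ℝ} (hc : 0 ≤ c) (hab : a ≤ b)
    (h : ∀ s t : ℝ, s ∈ Icc a b → t ∈ Icc a b → s ≤ t → d (γ t) (γ s) ≤ c * (t - s)) :
    pathLengthOn d γ a b ≤ ENNReal.ofReal (c * (b - a)) := by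
  refine iSup_le fun k => iSup_le fun t => iSup_le fun ht => iSup_le fun h0 => iSup_le fun hl => ?_
  calc ∑ i : Fin k, ENNReal.ofReal (d (γ (t i.succ)) (γ (t i.castSucc)))
      ≤ ∑ i : Fin k, ENNReal.ofReal (c * (t i.succ - t i.castSucc)) := by
        refine Finset.sum_le_sum fun i _ => ENNReal.ofReal_le_ofReal ?_
        exact h _ _ (partition_mem_Icc ht h0 hl _) (partition_mem_Icc ht h0 hl _)
          (ht (Fin.castSucc_le_succ i))
    _ = ENNReal.ofReal (∑ i : Fin k, c * (t i.succ - t i.castSucc)) := by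
        rw [ENNReal.ofReal_sum_of_nonneg]
        intro i _
        have := ht (Fin.castSucc_le_succ i)
        nlinarith
    _ = ENNReal.ofReal (c * (b - a)) := by
        rw [← Finset.mul_sum, telescope_fin t, h0, hl]

/-- monotonicity in the distance -/
lemma pathLengthOn_mono_d {d d' : E → E → ℝ} (hd : ∀ x y, d x y ≤ d' x y) (γ : ℝ → E)
    (a b : ℝ) : pathLengthOn d γ a b ≤ pathLengthOn d' γ a b := by
  refine iSup_le fun k => iSup_le fun t => iSup_le fun ht => iSup_le fun h0 => iSup_le fun hl => ?_
  refine le_iSup_of_le k <| le_iSup_of_le t <| le_iSup_of_le ht <| le_iSup_of_le h0 <|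
    le_iSup_of_le hl ?_
  exact Finset.sum_le_sum fun i _ => ENNReal.ofReal_le_ofReal (hd _ _)

/-- A bundled pseudo-distance. -/
structure PDist (E : Type*) where
  d : E → E → ℝ
  refl : ∀ x, d x x = 0
  symm : ∀ x y, d x y = d y x
  tri : ∀ x y z, d x z ≤ d x y + d y z

namespace PDist

lemma nonneg (m : PDist E) (x y : E) : 0 ≤ m.d x y := by
  have h1 := m.tri x y x
  have h2 := m.refl x
  have h3 := m.symm x y
  linarith

def Sp {E : Type*} (_ : PDist E) : Type _ := E

noncomputable instance (m : PDist E) : PseudoEMetricSpace m.Sp where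
  edist x y := ENNReal.ofReal (m.d x y)
  edist_self x := by show ENNReal.ofReal (m.d x x) = 0; rw [m.refl x, ENNReal.ofReal_zero]
  edist_comm x y := by rw [m.symm x y]
  edist_triangle x y z := by
    exact le_trans (ENNReal.ofReal_le_ofReal (m.tri x y z)) (ENNReal.ofReal_add_le)

def toSp (m : PDist E) (γ : ℝ → E) : ℝ → m.Sp := γ

lemma edist_eq (m : PDist E) (x y : m.Sp) : edist x y = ENNReal.ofReal (m.d x y) := rfl

theorem pathLengthOn_eq_eVariationOn (m : PDist E) (γ : ℝ → E) {a b : ℝ} (hab : a ≤ b) :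
    pathLengthOn m.d γ a b = eVariationOn (m.toSp γ) (Icc a b) := by
  apply le_antisymm
  · refine iSup_le fun k => iSup_le fun t => iSup_le fun ht => iSup_le fun h0 =>
      iSup_le fun hl => ?_
    have hTmem : ∀ i, pext t i ∈ Icc a b := by
      intro i
      unfold pext
      split_ifs with h
      · exact partition_mem_Icc ht h0 hl _
      · exact partition_mem_Icc ht h0 hl _
    refine le_trans (le_of_eq ?_) (eVariationOn.sum_le (f := m.toSp γ) (n := k) (pext_mono ht) hTmem)
    have : ∀ i : Fin k, ENNReal.ofReal (m.d (γ (t i.succ)) (γ (t i.castSucc)))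
        = (fun n => edist (m.toSp γ (pext t (n + 1))) (m.toSp γ (pext t n))) (i : ℕ) := by
      intro i
      simp only [pext_succ, pext_castSucc]
      rfl
    rw [Finset.sum_congr rfl (fun i _ => this i),
      Fin.sum_univ_eq_sum_range (fun n => edist (m.toSp γ (pext t (n + 1))) (m.toSp γ (pext t n))) k]
  · refine iSup_le ?_
    rintro ⟨n, u, hu, us⟩
    set t : Fin (n + 2 + 1) → ℝ := fun j =>
      if (j : ℕ) = 0 then a else if (j : ℕ) ≤ n + 1 then u ((j : ℕ) - 1) else b with htdef
    have htval : ∀ j : Fin (n + 3), t j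
        = if (j : ℕ) = 0 then a else if (j : ℕ) ≤ n + 1 then u ((j : ℕ) - 1) else b :=
      fun j => rfl
    have hmono : Monotone t := by
      intro i j hij
      rw [Fin.le_def] at hij
      rw [htval, htval]
      split_ifs
      all_goals first
        | exact le_refl _
        | omega
        | exact (us _).1
        | exact (us _).2
        | exact hu (by omega)
        | exact hab
    have h0 : t 0 = a := by rw [htval]; simp
    have hl : t (Fin.last (n + 2)) = b := by rw [htval]; simp
    refine le_trans ?_ (le_iSup_of_le (n + 2) <| le_iSup_of_le t <| le_iSup_of_le hmono <|
      le_iSup_of_le h0 <| le_iSup_of_le hl le_rfl)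
    have key : ∑ i : Fin (n + 2), ENNReal.ofReal (m.d (γ (t i.succ)) (γ (t i.castSucc)))
        = ∑ j ∈ Finset.range (n + 2),
            (fun j => ENNReal.ofReal (m.d (γ (pext t (j + 1))) (γ (pext t j)))) j := by
      rw [← Fin.sum_univ_eq_sum_range]
      exact Finset.sum_congr rfl fun i _ => by simp only [pext_succ, pext_castSucc]
    rw [key]
    have step : ∀ i ∈ Finset.range n,
        edist (m.toSp γ (u (i + 1))) (m.toSp γ (u i))
          = (fun j => ENNReal.ofReal (m.d (γ (pext t (j + 1))) (γ (pext t j)))) (1 + i) := by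
      intro i hi
      rw [Finset.mem_range] at hi
      have h1 : pext t (1 + i + 1) = u (i + 1) := by
        unfold pext
        rw [dif_pos (by omega), htval]
        rw [if_neg (by simp), if_pos (by simp; omega)]
        congr 1
        simp only [Fin.val_mk]
        omega
      have h2 : pext t (1 + i) = u i := by
        unfold pext
        rw [dif_pos (by omega), htval]
        rw [if_neg (by simp), if_pos (by simp; omega)]
        congr 1
        simp only [Fin.val_mk]
        omega
      simp only [h1, h2]
      rfl
    calc ∑ i ∈ Finset.range n, edist (m.toSp γ (u (i + 1))) (m.toSp γ (u i))
        = ∑ i ∈ Finset.range n,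
            (fun j => ENNReal.ofReal (m.d (γ (pext t (j + 1))) (γ (pext t j)))) (1 + i) :=
          Finset.sum_congr rfl step
      _ = ∑ j ∈ Finset.Ico 1 (n + 1),
            (fun j => ENNReal.ofReal (m.d (γ (pext t (j + 1))) (γ (pext t j)))) j := by
          rw [Finset.sum_Ico_eq_sum_range]
          simp
      _ ≤ ∑ j ∈ Finset.range (n + 2),
            (fun j => ENNReal.ofReal (m.d (γ (pext t (j + 1))) (γ (pext t j)))) j := by
          apply Finset.sum_le_sum_of_subset
          intro j hj
          rw [Finset.mem_Ico] at hj
          rw [Finset.mem_range]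
          omega

end PDist

end General
namespace PDist

variable {E : Type*} (m : PDist E) (γ : ℝ → E)

theorem pathLengthOn_cat {a b c : ℝ} (hab : a ≤ b) (hbc : b ≤ c) :
    pathLengthOn m.d γ a b + pathLengthOn m.d γ b c = pathLengthOn m.d γ a c := by
  rw [m.pathLengthOn_eq_eVariationOn γ hab, m.pathLengthOn_eq_eVariationOn γ hbc,
    m.pathLengthOn_eq_eVariationOn γ (hab.trans hbc)]
  have := eVariationOn.Icc_add_Icc (m.toSp γ) (s := univ) hab hbc (mem_univ b)
  simpa [univ_inter] using this

theorem ofReal_le_pathLengthOn {a b x y : ℝ} (hab : a ≤ b) (hx : x ∈ Icc a b)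
    (hy : y ∈ Icc a b) :
    ENNReal.ofReal (m.d (γ x) (γ y)) ≤ pathLengthOn m.d γ a b := by
  rw [m.pathLengthOn_eq_eVariationOn γ hab]
  exact eVariationOn.edist_le (m.toSp γ) hx hy

theorem sum_le_pathLengthOn {a b : ℝ} (hab : a ≤ b) {u : ℕ → ℝ} (hu : Monotone u)
    (us : ∀ i, u i ∈ Icc a b) (n : ℕ) :
    ∑ i ∈ Finset.range n, ENNReal.ofReal (m.d (γ (u (i + 1))) (γ (u i)))
      ≤ pathLengthOn m.d γ a b := by
  rw [m.pathLengthOn_eq_eVariationOn γ hab]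
  exact eVariationOn.sum_le (f := m.toSp γ) (n := n) hu us

lemma image_affine_Icc {c e a b : ℝ} (hc : 0 < c) :
    (fun x => c * x + e) '' Icc a b = Icc (c * a + e) (c * b + e) := by
  apply Subset.antisymm
  · rintro _ ⟨x, hx, rfl⟩
    exact ⟨show c * a + e ≤ c * x + e by nlinarith [hx.1],
      show c * x + e ≤ c * b + e by nlinarith [hx.2]⟩
  · intro y hy
    refine ⟨(y - e) / c, ⟨?_, ?_⟩, by field_simp; ring⟩
    · rw [le_div_iff₀ hc]; nlinarith [hy.1]
    · rw [div_le_iff₀ hc]; nlinarith [hy.2]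

theorem pathLengthOn_comp_affine {c e a b : ℝ} (hc : 0 < c) (hab : a ≤ b) :
    pathLengthOn m.d (fun s => γ (c * s + e)) a b
      = pathLengthOn m.d γ (c * a + e) (c * b + e) := by
  rw [m.pathLengthOn_eq_eVariationOn _ hab,
    m.pathLengthOn_eq_eVariationOn γ (by nlinarith : c * a + e ≤ c * b + e)]
  have hm : MonotoneOn (fun s : ℝ => c * s + e) (Icc a b) := fun x _ y _ hxy =>
    show c * x + e ≤ c * y + e by nlinarith
  have h := eVariationOn.comp_eq_of_monotoneOn (m.toSp γ) _ hm
  rw [image_affine_Icc hc] at h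
  exact h

theorem pathLength_comp_reflect :
    pathLengthOn m.d (fun s => γ (1 - s)) 0 1 = pathLengthOn m.d γ 0 1 := by
  rw [m.pathLengthOn_eq_eVariationOn _ zero_le_one,
    m.pathLengthOn_eq_eVariationOn γ zero_le_one]
  have hanti : AntitoneOn (fun s : ℝ => 1 - s) (Icc (0:ℝ) 1) := fun x _ y _ h =>
    show 1 - y ≤ 1 - x by linarith
  have h := eVariationOn.comp_eq_of_antitoneOn (m.toSp γ) _ hanti
  have himg : (fun s : ℝ => 1 - s) '' Icc 0 1 = Icc (0:ℝ) 1 := by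
    apply Subset.antisymm
    · rintro _ ⟨x, hx, rfl⟩
      exact ⟨show (0:ℝ) ≤ 1 - x by linarith [hx.2], show 1 - x ≤ 1 by linarith [hx.1]⟩
    · intro y hy
      exact ⟨1 - y, ⟨by linarith [hy.2], by linarith [hy.1]⟩, by ring⟩
  rw [himg] at h
  exact h

theorem pathLengthOn_self (a : ℝ) : pathLengthOn m.d γ a a = 0 := by
  rw [m.pathLengthOn_eq_eVariationOn γ le_rfl, Icc_self]
  exact eVariationOn.subsingleton _ Set.subsingleton_singleton

theorem pathLengthOn_congr {γ' : ℝ → E} {a b : ℝ} (hab : a ≤ b)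
    (h : ∀ s ∈ Icc a b, γ s = γ' s) :
    pathLengthOn m.d γ a b = pathLengthOn m.d γ' a b := by
  rw [m.pathLengthOn_eq_eVariationOn γ hab, m.pathLengthOn_eq_eVariationOn γ' hab]
  exact eVariationOn.eq_of_eqOn (fun x hx => h x hx)

theorem sum_blocks {k : ℕ} {t : Fin (k + 1) → ℝ} (ht : Monotone t) :
    ∑ i : Fin k, pathLengthOn m.d γ (t i.castSucc) (t i.succ)
      ≤ pathLengthOn m.d γ (t 0) (t (Fin.last k)) := by
  induction k with
  | zero => simp only [Finset.univ_eq_empty, Finset.sum_empty]; exact zero_le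
  | succ k ih =>
    rw [Fin.sum_univ_castSucc]
    have ht' : Monotone (t ∘ Fin.castSucc) := fun i j hij => ht (by simpa using hij)
    have step := ih (t := t ∘ Fin.castSucc) ht'
    have heq : ∀ i : Fin k,
        pathLengthOn m.d γ (t i.castSucc.castSucc) (t i.castSucc.succ)
          = pathLengthOn m.d γ ((t ∘ Fin.castSucc) i.castSucc) ((t ∘ Fin.castSucc) i.succ) := by
      intro i
      simp only [Function.comp_apply, Fin.succ_castSucc]
    calc (∑ i : Fin k, pathLengthOn m.d γ (t i.castSucc.castSucc) (t i.castSucc.succ))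
          + pathLengthOn m.d γ (t (Fin.last k).castSucc) (t (Fin.last k).succ)
        = (∑ i : Fin k, pathLengthOn m.d γ ((t ∘ Fin.castSucc) i.castSucc)
            ((t ∘ Fin.castSucc) i.succ))
          + pathLengthOn m.d γ (t (Fin.last k).castSucc) (t (Fin.last k).succ) := by
          rw [Finset.sum_congr rfl fun i _ => heq i]
      _ ≤ pathLengthOn m.d γ ((t ∘ Fin.castSucc) 0) ((t ∘ Fin.castSucc) (Fin.last k))
          + pathLengthOn m.d γ (t (Fin.last k).castSucc) (t (Fin.last k).succ) :=
          add_le_add step le_rfl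
      _ = pathLengthOn m.d γ (t 0) (t (Fin.last (k + 1))) := by
          have h1 : (t ∘ Fin.castSucc) 0 = t 0 := by
            simp only [Function.comp_apply]; congr 1
          have h2 : (t ∘ Fin.castSucc) (Fin.last k) = t (Fin.last k).castSucc := rfl
          have h3 : (Fin.last k).succ = Fin.last (k + 1) := Fin.succ_last k
          rw [h1, h2, h3]
          exact m.pathLengthOn_cat γ (ht (Fin.zero_le _)) (ht (Fin.le_last _))

end PDist
noncomputable section Square

open ENNReal

abbrev E2 := EuclideanSpace ℝ (Fin 2)

lemma coord_dist (x y : E2) (i : Fin 2) : |x i - y i| ≤ dist x y := by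
  rw [EuclideanSpace.dist_eq, ← Real.sqrt_sq (abs_nonneg (x i - y i)), sq_abs]
  apply Real.sqrt_le_sqrt
  have h : (x i - y i) ^ 2 = dist (x i) (y i) ^ 2 := by rw [Real.dist_eq, sq_abs]
  rw [h]
  exact Finset.single_le_sum (f := fun j => dist (x j) (y j) ^ 2)
    (fun j _ => sq_nonneg _) (Finset.mem_univ i)

/-- the open unit square -/
def Osq : Set E2 := {p : E2 | p 0 ∈ Ioo (0:ℝ) 1 ∧ p 1 ∈ Ioo (0:ℝ) 1}

/-- entrance fee: height above the strip of width ε -/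
def fee (ε : ℝ) (x : E2) : ℝ := max (x 1 - ε) 0

lemma fee_nonneg (ε : ℝ) (x : E2) : 0 ≤ fee ε x := le_max_right _ _

lemma fee_lip (ε : ℝ) (x y : E2) : |fee ε x - fee ε y| ≤ dist x y := by
  refine le_trans ?_ (coord_dist x y 1)
  have h := abs_max_sub_max_le_abs (x 1 - ε) (y 1 - ε) 0
  calc |fee ε x - fee ε y| ≤ |x 1 - ε - (y 1 - ε)| := h
    _ = |x 1 - y 1| := by ring_nf

lemma fee_mono {ε ε' : ℝ} (h : ε' ≤ ε) (x : E2) : fee ε x ≤ fee ε' x :=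
  max_le_max (by linarith) le_rfl

lemma fee_le_of_le {ε : ℝ} {x : E2} (h : x 1 ≤ ε) : fee ε x = 0 :=
  max_eq_right (by linarith)

lemma le_fee {ε : ℝ} (x : E2) : x 1 - ε ≤ fee ε x := le_max_left _ _

/-- the central distance-like function -/
def rho (ε : ℝ) (x y : E2) : ℝ := min (2 * dist x y) (dist x y + fee ε x + fee ε y)

lemma rho_le_two_dist (ε : ℝ) (x y : E2) : rho ε x y ≤ 2 * dist x y := min_le_left _ _

lemma dist_le_rho (ε : ℝ) (x y : E2) : dist x y ≤ rho ε x y := by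
  apply le_min
  · linarith [dist_nonneg (x := x) (y := y)]
  · linarith [fee_nonneg ε x, fee_nonneg ε y]

lemma rho_refl (ε : ℝ) (x : E2) : rho ε x x = 0 := by
  have h1 := fee_nonneg ε x
  simp only [rho, dist_self, mul_zero, zero_add]
  rw [min_eq_left (by linarith)]

lemma rho_symm (ε : ℝ) (x y : E2) : rho ε x y = rho ε y x := by
  simp only [rho, dist_comm x y]
  ring_nf

lemma rho_tri (ε : ℝ) (x y z : E2) : rho ε x z ≤ rho ε x y + rho ε y z := by
  have hxy := abs_le.1 (fee_lip ε x y)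
  have hyz := abs_le.1 (fee_lip ε y z)
  have htri := dist_triangle x y z
  have hfy := fee_nonneg ε y
  have hA := rho_le_two_dist ε x z
  have hB : rho ε x z ≤ dist x z + fee ε x + fee ε z := min_le_right _ _
  rcases min_cases (2 * dist x y) (dist x y + fee ε x + fee ε y) with ⟨h1, h1'⟩ | ⟨h1, h1'⟩ <;>
    rcases min_cases (2 * dist y z) (dist y z + fee ε y + fee ε z) with ⟨h2, h2'⟩ | ⟨h2, h2'⟩ <;>
    simp only [rho] at hA hB ⊢ <;> rw [h1, h2] <;> linarith

lemma rho_mono_eps {ε ε' : ℝ} (h : ε' ≤ ε) (x y : E2) : rho ε x y ≤ rho ε' x y :=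
  min_le_min le_rfl (by linarith [fee_mono h x, fee_mono h y])

lemma rho_cheap {ε : ℝ} {x y : E2} (hx : x 1 ≤ ε) (hy : y 1 ≤ ε) : rho ε x y = dist x y := by
  rw [rho, fee_le_of_le hx, fee_le_of_le hy]
  simp only [add_zero]
  rw [min_eq_right (by linarith [dist_nonneg (x := x) (y := y)])]

lemma rho_far {ε : ℝ} {x y : E2} (h : dist x y ≤ fee ε x + fee ε y) :
    rho ε x y = 2 * dist x y := min_eq_left (by linarith)

end Square
noncomputable section Seg

def clamp (t : ℝ) : ℝ := max 0 (min 1 t)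

lemma clamp_mem (t : ℝ) : clamp t ∈ Icc (0:ℝ) 1 :=
  ⟨le_max_left _ _, max_le (by norm_num) (min_le_left _ _)⟩

lemma clamp_of_mem {t : ℝ} (h : t ∈ Icc (0:ℝ) 1) : clamp t = t := by
  rw [clamp, min_eq_right h.2, max_eq_right h.1]

lemma clamp_lip (s t : ℝ) : |clamp s - clamp t| ≤ |s - t| := by
  have h1 : |clamp s - clamp t| ≤ |min 1 s - min 1 t| := by
    rw [clamp, clamp, max_comm 0 (min 1 s), max_comm 0 (min 1 t)]
    exact abs_max_sub_max_le_abs _ _ _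
  refine h1.trans ?_
  have h2 := abs_min_sub_min_le_max 1 s 1 t
  simpa using h2

lemma Osq_convex_point {x y : E2} (hx : x ∈ Osq) (hy : y ∈ Osq) {t : ℝ}
    (ht : t ∈ Icc (0:ℝ) 1) : (1 - t) • x + t • y ∈ Osq := by
  have key : ∀ i : Fin 2, ((1 - t) • x + t • y) i = (1 - t) * x i + t * y i := by
    intro i
    simp [PiLp.add_apply, PiLp.smul_apply, smul_eq_mul]
  constructor
  · have := (convex_Ioo (0:ℝ) 1) hx.1 hy.1 (by linarith [ht.2] : (0:ℝ) ≤ 1 - t) ht.1 (by ring)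
    show ((1 - t) • x + t • y) 0 ∈ Ioo (0:ℝ) 1
    rw [key 0]
    simpa [smul_eq_mul] using this
  · have := (convex_Ioo (0:ℝ) 1) hx.2 hy.2 (by linarith [ht.2] : (0:ℝ) ≤ 1 - t) ht.1 (by ring)
    show ((1 - t) • x + t • y) 1 ∈ Ioo (0:ℝ) 1
    rw [key 1]
    simpa [smul_eq_mul] using this

def seg (x y : ↥Osq) : ℝ → ↥Osq := fun t =>
  ⟨(1 - clamp t) • (x : E2) + clamp t • (y : E2), Osq_convex_point x.2 y.2 (clamp_mem t)⟩

lemma seg_zero (x y : ↥Osq) : seg x y 0 = x := by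
  apply Subtype.ext
  show (1 - clamp 0) • (x : E2) + clamp 0 • (y : E2) = x
  rw [clamp_of_mem ⟨le_rfl, zero_le_one⟩]
  simp

lemma seg_one (x y : ↥Osq) : seg x y 1 = y := by
  apply Subtype.ext
  show (1 - clamp 1) • (x : E2) + clamp 1 • (y : E2) = y
  rw [clamp_of_mem ⟨zero_le_one, le_rfl⟩]
  simp

lemma seg_coe_dist (x y : ↥Osq) (s t : ℝ) :
    dist (seg x y s : E2) (seg x y t : E2) = |clamp s - clamp t| * dist (x : E2) (y : E2) := by
  rw [dist_eq_norm, dist_eq_norm]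
  have key : (seg x y s : E2) - (seg x y t : E2)
      = (clamp s - clamp t) • ((y : E2) - (x : E2)) := by
    show ((1 - clamp s) • (x : E2) + clamp s • (y : E2))
        - ((1 - clamp t) • (x : E2) + clamp t • (y : E2)) = _
    module
  rw [key, norm_smul, Real.norm_eq_abs, norm_sub_rev]

lemma seg_dist (x y : ↥Osq) (s t : ℝ) :
    dist (seg x y s) (seg x y t) = |clamp s - clamp t| * dist (x : E2) (y : E2) := by
  rw [Subtype.dist_eq, seg_coe_dist]

lemma seg_lip (x y : ↥Osq) : LipCurve (fun a b : ↥Osq => dist a b) (seg x y) := by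
  refine ⟨dist (x : E2) (y : E2), fun s hs t ht => ?_⟩
  show dist (seg x y s) (seg x y t) ≤ _
  rw [seg_dist, clamp_of_mem hs, clamp_of_mem ht, mul_comm]

lemma seg_coord1 (x y : ↥Osq) (t : ℝ) :
    (seg x y t : E2) 1 = (1 - clamp t) * (x : E2) 1 + clamp t * (y : E2) 1 := by
  show ((1 - clamp t) • (x : E2) + clamp t • (y : E2)) 1 = _
  simp [PiLp.add_apply, PiLp.smul_apply, smul_eq_mul]

end Seg
noncomputable section DN

abbrev OΩ : Type := ↥Osq

def rpd (ε : ℝ) : PDist OΩ where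
  d := fun x y => rho ε (x : E2) (y : E2)
  refl x := rho_refl ε x
  symm x y := rho_symm ε x y
  tri x y z := rho_tri ε (x : E2) (y : E2) (z : E2)

lemma rpd_d (ε : ℝ) (x y : OΩ) : (rpd ε).d x y = rho ε (x : E2) (y : E2) := rfl

def dnE (ε : ℝ) (x y : OΩ) : ℝ≥0∞ :=
  ⨅ (γ : ℝ → OΩ) (_ : LipCurve (fun a b : OΩ => dist a b) γ) (_ : γ 0 = x) (_ : γ 1 = y),
    pathLength (rpd ε).d γ

lemma dnE_le {ε : ℝ} {x y : OΩ} {γ : ℝ → OΩ} (h1 : LipCurve (fun a b : OΩ => dist a b) γ)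
    (h2 : γ 0 = x) (h3 : γ 1 = y) : dnE ε x y ≤ pathLength (rpd ε).d γ :=
  iInf_le_of_le γ (iInf_le_of_le h1 (iInf_le_of_le h2 (iInf_le_of_le h3 le_rfl)))

lemma pathLength_seg_le (ε : ℝ) (x y : OΩ) :
    pathLength (rpd ε).d (seg x y) ≤ ENNReal.ofReal (2 * dist (x : E2) (y : E2)) := by
  have key : pathLengthOn (rpd ε).d (seg x y) 0 1
      ≤ ENNReal.ofReal ((2 * dist (x : E2) (y : E2)) * (1 - 0)) := by
    refine pathLengthOn_le_mul (by positivity) zero_le_one fun s t hs ht hst => ?_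
    rw [rpd_d]
    calc rho ε (seg x y t : E2) (seg x y s : E2)
        ≤ 2 * dist (seg x y t : E2) (seg x y s : E2) := rho_le_two_dist _ _ _
      _ = 2 * dist (x : E2) (y : E2) * (t - s) := by
          rw [seg_coe_dist, clamp_of_mem ht, clamp_of_mem hs, abs_of_nonneg (by linarith)]
          ring
  simpa [pathLength] using key

lemma dnE_le_two_dist (ε : ℝ) (x y : OΩ) :
    dnE ε x y ≤ ENNReal.ofReal (2 * dist (x : E2) (y : E2)) :=
  (dnE_le (seg_lip x y) (seg_zero x y) (seg_one x y)).trans (pathLength_seg_le ε x y)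

lemma dnE_ne_top (ε : ℝ) (x y : OΩ) : dnE ε x y ≠ ⊤ :=
  ne_top_of_le_ne_top ENNReal.ofReal_ne_top (dnE_le_two_dist ε x y)

lemma ofReal_dist_le_dnE (ε : ℝ) (x y : OΩ) :
    ENNReal.ofReal (dist (x : E2) (y : E2)) ≤ dnE ε x y := by
  refine le_iInf fun γ => le_iInf fun hLip => le_iInf fun h0 => le_iInf fun h1 => ?_
  have key := (rpd ε).ofReal_le_pathLengthOn γ zero_le_one (Set.left_mem_Icc.2 zero_le_one)
    (Set.right_mem_Icc.2 zero_le_one)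
  rw [h0, h1, rpd_d] at key
  exact le_trans (ENNReal.ofReal_le_ofReal (dist_le_rho ε _ _)) key

lemma dnE_self (ε : ℝ) (x : OΩ) : dnE ε x x = 0 := by
  apply le_antisymm _ zero_le
  have hLip : LipCurve (fun a b : OΩ => dist a b) (fun _ : ℝ => x) :=
    ⟨0, fun s _ t _ => by
      show dist x x ≤ 0 * |s - t|
      simp⟩
  refine (dnE_le hLip rfl rfl).trans ?_
  refine iSup_le fun k => iSup_le fun t => iSup_le fun _ => iSup_le fun _ => iSup_le fun _ => ?_
  simp [rpd_d, rho_refl]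

lemma dnE_symm (ε : ℝ) (x y : OΩ) : dnE ε x y = dnE ε y x := by
  suffices h : ∀ x y : OΩ, dnE ε x y ≤ dnE ε y x from le_antisymm (h x y) (h y x)
  intro x y
  refine le_iInf fun γ => le_iInf fun hLip => le_iInf fun h0 => le_iInf fun h1 => ?_
  have hLip' : LipCurve (fun a b : OΩ => dist a b) (fun s => γ (1 - s)) := by
    obtain ⟨K, hK⟩ := hLip
    refine ⟨K, fun s hs t ht => ?_⟩
    have := hK (1 - s) ⟨by linarith [hs.2], by linarith [hs.1]⟩
      (1 - t) ⟨by linarith [ht.2], by linarith [ht.1]⟩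
    have harg : |1 - s - (1 - t)| = |s - t| := by
      rw [abs_sub_comm]
      ring_nf
    rw [harg] at this
    exact this
  have hle := dnE_le (ε := ε) hLip' (show γ (1 - 0) = x by rw [show (1:ℝ) - 0 = 1 by norm_num, h1])
    (show γ (1 - 1) = y by rw [show (1:ℝ) - 1 = 0 by norm_num, h0])
  refine hle.trans (le_of_eq ?_)
  exact (rpd ε).pathLength_comp_reflect γ

lemma dnE_tri (ε : ℝ) (x y z : OΩ) : dnE ε x z ≤ dnE ε x y + dnE ε y z := by
  refine ENNReal.le_of_forall_pos_le_add fun η hη _ => ?_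
  set η' : ℝ≥0∞ := (η : ℝ≥0∞) / 2 with hη'def
  have hη' : η' ≠ 0 :=
    (ENNReal.div_pos (by exact_mod_cast hη.ne') ENNReal.ofNat_ne_top).ne'
  have h1 : dnE ε x y < dnE ε x y + η' :=
    ENNReal.lt_add_right (dnE_ne_top ε x y) hη'
  have h2 : dnE ε y z < dnE ε y z + η' :=
    ENNReal.lt_add_right (dnE_ne_top ε y z) hη'
  rw [dnE] at h1 h2
  simp only [iInf_lt_iff] at h1 h2
  obtain ⟨γ1, hl1, h10, h11, hp1⟩ := h1
  obtain ⟨γ2, hl2, h20, h21, hp2⟩ := h2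
  have hp1' : pathLength (rpd ε).d γ1 ≤ dnE ε x y + η' := by rw [dnE]; exact hp1.le
  have hp2' : pathLength (rpd ε).d γ2 ≤ dnE ε y z + η' := by rw [dnE]; exact hp2.le
  set δ : ℝ → OΩ := fun s => if s ≤ 1/2 then γ1 (2*s) else γ2 (2*s - 1) with hδdef
  have hδval : ∀ s : ℝ, δ s = if s ≤ 1/2 then γ1 (2*s) else γ2 (2*s - 1) := fun s => rfl
  obtain ⟨K1, hK1⟩ := hl1
  obtain ⟨K2, hK2⟩ := hl2
  set K0 : ℝ := max K1 (max K2 0) with hK0def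
  have hK01 : K1 ≤ K0 := le_max_left _ _
  have hK02 : K2 ≤ K0 := le_trans (le_max_left _ _) (le_max_right _ _)
  have hK00 : 0 ≤ K0 := le_trans (le_max_right _ _) (le_max_right _ _)
  have hmid : γ1 1 = γ2 0 := by rw [h11, h20]
  have hδLip : LipCurve (fun a b : OΩ => dist a b) δ := by
    refine ⟨2 * K0, fun s hs t ht => ?_⟩
    show dist (δ s) (δ t) ≤ 2 * K0 * |s - t|
    rw [hδval, hδval]
    by_cases hs2 : s ≤ 1/2 <;> by_cases ht2 : t ≤ 1/2
    · rw [if_pos hs2, if_pos ht2]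
      have := hK1 (2*s) ⟨by linarith [hs.1], by linarith⟩ (2*t) ⟨by linarith [ht.1], by linarith⟩
      refine le_trans this ?_
      have : |2*s - 2*t| = 2 * |s - t| := by rw [show 2*s - 2*t = 2*(s-t) by ring, abs_mul]; norm_num
      rw [this]
      nlinarith [abs_nonneg (s - t)]
    · rw [if_pos hs2, if_neg ht2]
      push_neg at ht2
      have hd1 := hK1 (2*s) ⟨by linarith [hs.1], by linarith⟩ 1 ⟨zero_le_one, le_rfl⟩
      have hd2 := hK2 0 ⟨le_rfl, zero_le_one⟩ (2*t - 1) ⟨by linarith, by linarith [ht.2]⟩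
      simp only [] at hd1 hd2
      rw [hmid] at hd1
      have htri := dist_triangle (γ1 (2*s)) (γ2 0) (γ2 (2*t - 1))
      have e1 : |2*s - 1| = 1 - 2*s := by rw [abs_of_nonpos (by linarith)]; ring
      have e2 : |0 - (2*t - 1)| = 2*t - 1 := by rw [abs_of_nonpos (by linarith)]; ring
      rw [e1] at hd1; rw [e2] at hd2
      have e3 : |s - t| = t - s := by rw [abs_of_nonpos (by linarith)]; ring
      rw [e3]
      have m1 : K1 * (1 - 2*s) ≤ K0 * (1 - 2*s) :=
        mul_le_mul_of_nonneg_right hK01 (by linarith)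
      have m2 : K2 * (2*t - 1) ≤ K0 * (2*t - 1) :=
        mul_le_mul_of_nonneg_right hK02 (by linarith)
      linarith
    · rw [if_neg hs2, if_pos ht2]
      push_neg at hs2
      have hd1 := hK2 (2*s - 1) ⟨by linarith, by linarith [hs.2]⟩ 0 ⟨le_rfl, zero_le_one⟩
      have hd2 := hK1 1 ⟨zero_le_one, le_rfl⟩ (2*t) ⟨by linarith [ht.1], by linarith⟩
      simp only [] at hd1 hd2
      rw [← hmid] at hd1
      have htri := dist_triangle (γ2 (2*s - 1)) (γ1 1) (γ1 (2*t))
      have e1 : |2*s - 1 - 0| = 2*s - 1 := by rw [abs_of_nonneg (by linarith)]; ring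
      have e2 : |1 - 2*t| = 1 - 2*t := abs_of_nonneg (by linarith)
      rw [e1] at hd1; rw [e2] at hd2
      have e3 : |s - t| = s - t := abs_of_nonneg (by linarith)
      rw [e3]
      have m1 : K2 * (2*s - 1) ≤ K0 * (2*s - 1) :=
        mul_le_mul_of_nonneg_right hK02 (by linarith)
      have m2 : K1 * (1 - 2*t) ≤ K0 * (1 - 2*t) :=
        mul_le_mul_of_nonneg_right hK01 (by linarith)
      linarith
    · rw [if_neg hs2, if_neg ht2]
      push_neg at hs2 ht2
      have := hK2 (2*s - 1) ⟨by linarith, by linarith [hs.2]⟩ (2*t - 1)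
        ⟨by linarith, by linarith [ht.2]⟩
      refine le_trans this ?_
      have : |2*s - 1 - (2*t - 1)| = 2 * |s - t| := by
        rw [show 2*s - 1 - (2*t - 1) = 2*(s-t) by ring, abs_mul]; norm_num
      rw [this]
      nlinarith [abs_nonneg (s - t)]
  have hδ0 : δ 0 = x := by
    rw [hδval, if_pos (by norm_num : (0:ℝ) ≤ 1/2), show (2:ℝ) * 0 = 0 by norm_num, h10]
  have hδ1 : δ 1 = z := by
    rw [hδval, if_neg (by norm_num : ¬ (1:ℝ) ≤ 1/2), show (2:ℝ) * 1 - 1 = 1 by norm_num, h21]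
  have hcat : pathLength (rpd ε).d δ
      = pathLengthOn (rpd ε).d δ 0 (1/2) + pathLengthOn (rpd ε).d δ (1/2) 1 :=
    ((rpd ε).pathLengthOn_cat δ (by norm_num) (by norm_num)).symm
  have hpiece1 : pathLengthOn (rpd ε).d δ 0 (1/2) = pathLength (rpd ε).d γ1 := by
    have hcongr : pathLengthOn (rpd ε).d δ 0 (1/2)
        = pathLengthOn (rpd ε).d (fun s => γ1 (2*s + 0)) 0 (1/2) := by
      refine (rpd ε).pathLengthOn_congr δ (by norm_num) fun s hs => ?_
      rw [hδval, if_pos hs.2, show 2*s + 0 = 2*s by ring]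
    rw [hcongr, (rpd ε).pathLengthOn_comp_affine γ1 (by norm_num : (0:ℝ) < 2) (by norm_num)]
    norm_num [pathLength]
  have hpiece2 : pathLengthOn (rpd ε).d δ (1/2) 1 = pathLength (rpd ε).d γ2 := by
    have hcongr : pathLengthOn (rpd ε).d δ (1/2) 1
        = pathLengthOn (rpd ε).d (fun s => γ2 (2*s + (-1))) (1/2) 1 := by
      refine (rpd ε).pathLengthOn_congr δ (by norm_num) fun s hs => ?_
      rw [hδval]
      by_cases hs2 : s ≤ 1/2
      · have hseq : s = 1/2 := le_antisymm hs2 hs.1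
        rw [if_pos hs2, hseq]
        rw [show (2:ℝ)*(1/2) + (-1) = 0 by norm_num, show (2:ℝ)*(1/2) = 1 by norm_num, hmid]
      · rw [if_neg hs2, show 2*s + (-1) = 2*s - 1 by ring]
    rw [hcongr, (rpd ε).pathLengthOn_comp_affine γ2 (by norm_num : (0:ℝ) < 2) (by norm_num)]
    norm_num [pathLength]
  calc dnE ε x z ≤ pathLength (rpd ε).d δ := dnE_le hδLip hδ0 hδ1
    _ = pathLength (rpd ε).d γ1 + pathLength (rpd ε).d γ2 := by rw [hcat, hpiece1, hpiece2]
    _ ≤ (dnE ε x y + η') + (dnE ε y z + η') := add_le_add hp1' hp2'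
    _ = dnE ε x y + dnE ε y z + η := by
        rw [hη'def]
        rw [show ∀ a b c : ℝ≥0∞, (a + c) + (b + c) = a + b + (c + c) from fun a b c => by ring]
        rw [ENNReal.add_halves]

def dnR (ε : ℝ) (x y : OΩ) : ℝ := (dnE ε x y).toReal

lemma ofReal_dnR (ε : ℝ) (x y : OΩ) : ENNReal.ofReal (dnR ε x y) = dnE ε x y :=
  ENNReal.ofReal_toReal (dnE_ne_top ε x y)

lemma dnR_nonneg (ε : ℝ) (x y : OΩ) : 0 ≤ dnR ε x y := ENNReal.toReal_nonneg

lemma dnR_le_two_dist (ε : ℝ) (x y : OΩ) : dnR ε x y ≤ 2 * dist (x : E2) (y : E2) :=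
  ENNReal.toReal_le_of_le_ofReal (by positivity) (dnE_le_two_dist ε x y)

lemma dist_le_dnR (ε : ℝ) (x y : OΩ) : dist (x : E2) (y : E2) ≤ dnR ε x y := by
  have h := ENNReal.toReal_mono (dnE_ne_top ε x y) (ofReal_dist_le_dnE ε x y)
  rwa [ENNReal.toReal_ofReal dist_nonneg] at h

lemma dnR_self (ε : ℝ) (x : OΩ) : dnR ε x x = 0 := by rw [dnR, dnE_self]; rfl

lemma dnR_symm (ε : ℝ) (x y : OΩ) : dnR ε x y = dnR ε y x := by rw [dnR, dnE_symm]; rfl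

lemma dnR_tri (ε : ℝ) (x y z : OΩ) : dnR ε x z ≤ dnR ε x y + dnR ε y z := by
  have h := ENNReal.toReal_mono
    (ENNReal.add_ne_top.2 ⟨dnE_ne_top ε x y, dnE_ne_top ε y z⟩) (dnE_tri ε x y z)
  rwa [ENNReal.toReal_add (dnE_ne_top ε x y) (dnE_ne_top ε y z)] at h

def dnpd (ε : ℝ) : PDist OΩ := ⟨dnR ε, dnR_self ε, dnR_symm ε, dnR_tri ε⟩

end DN
noncomputable section DN2

lemma dnE_le_pathLengthOn {ε : ℝ} {γ : ℝ → OΩ} (hLip : LipCurve (fun a b : OΩ => dist a b) γ)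
    {u v : ℝ} (hu : 0 ≤ u) (huv : u ≤ v) (hv : v ≤ 1) :
    dnE ε (γ u) (γ v) ≤ pathLengthOn (rpd ε).d γ u v := by
  rcases eq_or_lt_of_le huv with rfl | hlt
  · rw [dnE_self]
    exact zero_le
  · have hδ0 : γ ((v - u) * 0 + u) = γ u := by norm_num
    have hδ1 : γ ((v - u) * 1 + u) = γ v := by norm_num
    have hδLip : LipCurve (fun a b : OΩ => dist a b) (fun s => γ ((v - u) * s + u)) := by
      obtain ⟨K, hK⟩ := hLip
      refine ⟨K * (v - u), fun s hs t ht => ?_⟩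
      have hmem : ∀ w : ℝ, w ∈ Icc (0:ℝ) 1 → (v - u) * w + u ∈ Icc (0:ℝ) 1 := by
        intro w hw
        constructor
        · nlinarith [hw.1]
        · nlinarith [hw.2]
      have := hK _ (hmem s hs) _ (hmem t ht)
      refine le_trans this (le_of_eq ?_)
      have : (v - u) * s + u - ((v - u) * t + u) = (v - u) * (s - t) := by ring
      rw [this, abs_mul, abs_of_nonneg (by linarith : (0:ℝ) ≤ v - u)]
      ring
    have hle := dnE_le (ε := ε) hδLip hδ0 hδ1
    refine hle.trans (le_of_eq ?_)
    show pathLengthOn (rpd ε).d _ 0 1 = _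
    rw [(rpd ε).pathLengthOn_comp_affine γ (show (0:ℝ) < v - u by linarith) zero_le_one]
    norm_num

lemma pathLength_dnR_le (ε : ℝ) {γ : ℝ → OΩ} (hLip : LipCurve (fun a b : OΩ => dist a b) γ) :
    pathLength (dnR ε) γ ≤ pathLength (rpd ε).d γ := by
  refine iSup_le fun k => iSup_le fun t => iSup_le fun ht => iSup_le fun h0 => iSup_le fun hl => ?_
  calc ∑ i : Fin k, ENNReal.ofReal (dnR ε (γ (t i.succ)) (γ (t i.castSucc)))
      ≤ ∑ i : Fin k, pathLengthOn (rpd ε).d γ (t i.castSucc) (t i.succ) := by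
        refine Finset.sum_le_sum fun i _ => ?_
        rw [ofReal_dnR, dnE_symm]
        exact dnE_le_pathLengthOn hLip (partition_mem_Icc ht h0 hl i.castSucc).1
          (ht (Fin.castSucc_le_succ i)) (partition_mem_Icc ht h0 hl i.succ).2
    _ ≤ pathLengthOn (rpd ε).d γ (t 0) (t (Fin.last k)) := (rpd ε).sum_blocks γ ht
    _ = pathLength (rpd ε).d γ := by rw [h0, hl]; rfl

lemma lip_dnR_of_lip {ε : ℝ} {γ : ℝ → OΩ} (hLip : LipCurve (fun a b : OΩ => dist a b) γ) :
    LipCurve (dnR ε) γ := by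
  obtain ⟨K, hK⟩ := hLip
  refine ⟨2 * K, fun s hs t ht => ?_⟩
  have h1 := dnR_le_two_dist ε (γ s) (γ t)
  have h2 := hK s hs t ht
  rw [← Subtype.dist_eq] at h1
  simp only [] at h2
  calc dnR ε (γ s) (γ t) ≤ 2 * dist (γ s) (γ t) := h1
    _ ≤ 2 * (K * |s - t|) := by linarith
    _ = 2 * K * |s - t| := by ring

lemma isLengthDist_dnR (ε : ℝ) : IsLengthDist (dnR ε) := by
  intro x y
  apply le_antisymm
  · refine le_iInf fun γ => le_iInf fun hLip => le_iInf fun h0 => le_iInf fun h1 => ?_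
    have key := (dnpd ε).ofReal_le_pathLengthOn γ (a := 0) (b := 1) (x := 0) (y := 1)
      zero_le_one ⟨le_rfl, zero_le_one⟩ ⟨zero_le_one, le_rfl⟩
    rw [h0, h1] at key
    exact key
  · refine ENNReal.le_of_forall_pos_le_add fun η hη _ => ?_
    have hlt : dnE ε x y < dnE ε x y + η :=
      ENNReal.lt_add_right (dnE_ne_top ε x y) (by exact_mod_cast hη.ne')
    rw [dnE] at hlt
    simp only [iInf_lt_iff] at hlt
    obtain ⟨γ, hLip, h0, h1, hp⟩ := hlt
    have hp' : pathLength (rpd ε).d γ ≤ dnE ε x y + η := by rw [dnE]; exact hp.le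
    calc (⨅ (γ : ℝ → OΩ) (_ : LipCurve (dnR ε) γ) (_ : γ 0 = x) (_ : γ 1 = y),
          pathLength (dnR ε) γ)
        ≤ pathLength (dnR ε) γ :=
          iInf_le_of_le γ (iInf_le_of_le (lip_dnR_of_lip hLip)
            (iInf_le_of_le h0 (iInf_le_of_le h1 le_rfl)))
      _ ≤ pathLength (rpd ε).d γ := pathLength_dnR_le ε hLip
      _ ≤ dnE ε x y + η := hp'
      _ = ENNReal.ofReal (dnR ε x y) + η := by rw [ofReal_dnR]

lemma isDistance_dnR (ε : ℝ) : IsDistance (dnR ε) := by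
  refine ⟨dnR_symm ε, dnR_tri ε, fun x y => ⟨fun h => ?_, fun h => h ▸ dnR_self ε x⟩⟩
  have := dist_le_dnR ε x y
  rw [h] at this
  exact Subtype.ext (by rwa [← dist_le_zero])

lemma dnE_mono {ε' ε : ℝ} (h : ε' ≤ ε) (x y : OΩ) : dnE ε x y ≤ dnE ε' x y := by
  refine iInf_mono fun γ => iInf_mono fun _ => iInf_mono fun _ => iInf_mono fun _ => ?_
  exact pathLengthOn_mono_d (fun a b => rho_mono_eps h _ _) γ 0 1

lemma dnR_mono {ε' ε : ℝ} (h : ε' ≤ ε) (x y : OΩ) : dnR ε x y ≤ dnR ε' x y :=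
  ENNReal.toReal_mono (dnE_ne_top ε' x y) (dnE_mono h x y)

lemma dnR_le_dist_of_strip {ε : ℝ} {x y : OΩ} (hx : (x : E2) 1 ≤ ε) (hy : (y : E2) 1 ≤ ε) :
    dnR ε x y ≤ dist (x : E2) (y : E2) := by
  have key : pathLength (rpd ε).d (seg x y) ≤ ENNReal.ofReal (dist (x : E2) (y : E2)) := by
    have h2 : pathLengthOn (rpd ε).d (seg x y) 0 1
        ≤ ENNReal.ofReal (dist (x : E2) (y : E2) * (1 - 0)) := by
      refine pathLengthOn_le_mul dist_nonneg zero_le_one fun s t hs ht hst => ?_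
      rw [rpd_d]
      have hcs : (seg x y t : E2) 1 ≤ ε := by
        rw [seg_coord1]
        have hc := clamp_mem t
        nlinarith [hc.1, hc.2, (x.2 :  _ ∈ Osq).2.1, (y.2 : _ ∈ Osq).2.1]
      have hcs' : (seg x y s : E2) 1 ≤ ε := by
        rw [seg_coord1]
        have hc := clamp_mem s
        nlinarith [hc.1, hc.2, (x.2 :  _ ∈ Osq).2.1, (y.2 : _ ∈ Osq).2.1]
      rw [rho_cheap hcs hcs', seg_coe_dist, clamp_of_mem ht, clamp_of_mem hs,
        abs_of_nonneg (by linarith)]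
      ring_nf
      exact le_refl _
    simpa [pathLength] using h2
  have := (dnE_le (ε := ε) (seg_lip x y) (seg_zero x y) (seg_one x y)).trans key
  exact ENNReal.toReal_le_of_le_ofReal dist_nonneg this

theorem dnR_eq_two_dist {δ ε : ℝ} {x y : OΩ} (hδ : 0 < δ) (hε0 : 0 ≤ ε) (hε : ε ≤ δ/2)
    (hx : δ ≤ (x : E2) 1) (hy : δ ≤ (y : E2) 1)
    (hclose : 2 * dist (x : E2) (y : E2) ≤ δ/2) :
    dnR ε x y = 2 * dist (x : E2) (y : E2) := by
  apply le_antisymm (dnR_le_two_dist ε x y)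
  have key : ENNReal.ofReal (2 * dist (x : E2) (y : E2)) ≤ dnE ε x y := by
    refine le_iInf fun γ => le_iInf fun hLip => le_iInf fun h0 => le_iInf fun h1 => ?_
    obtain ⟨K, hK⟩ := hLip
    by_cases hcase : ∃ s ∈ Icc (0:ℝ) 1, (γ s : E2) 1 ≤ 3*δ/4
    · obtain ⟨s, hs, hlow⟩ := hcase
      have hsplit : pathLength (rpd ε).d γ
          = pathLengthOn (rpd ε).d γ 0 s + pathLengthOn (rpd ε).d γ s 1 :=
        ((rpd ε).pathLengthOn_cat γ hs.1 hs.2).symm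
      have hb1 : ENNReal.ofReal (δ/4) ≤ pathLengthOn (rpd ε).d γ 0 s := by
        have h := (rpd ε).ofReal_le_pathLengthOn γ (a := 0) (b := s) (x := 0) (y := s)
          hs.1 ⟨le_rfl, hs.1⟩ ⟨hs.1, le_rfl⟩
        refine le_trans (ENNReal.ofReal_le_ofReal ?_) h
        rw [rpd_d]
        have hc := coord_dist (γ 0 : E2) (γ s : E2) 1
        have hr := dist_le_rho ε (γ 0 : E2) (γ s : E2)
        have hx1 : δ ≤ ((γ 0 : OΩ) : E2) 1 := by rw [h0]; exact hx
        have habs : δ/4 ≤ |(γ 0 : E2) 1 - (γ s : E2) 1| :=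
          le_trans (by linarith) (le_abs_self _)
        linarith
      have hb2 : ENNReal.ofReal (δ/4) ≤ pathLengthOn (rpd ε).d γ s 1 := by
        have h := (rpd ε).ofReal_le_pathLengthOn γ (a := s) (b := 1) (x := 1) (y := s)
          hs.2 ⟨hs.2, le_rfl⟩ ⟨le_rfl, hs.2⟩
        refine le_trans (ENNReal.ofReal_le_ofReal ?_) h
        rw [rpd_d]
        have hc := coord_dist (γ 1 : E2) (γ s : E2) 1
        have hr := dist_le_rho ε (γ 1 : E2) (γ s : E2)
        have hy1 : δ ≤ ((γ 1 : OΩ) : E2) 1 := by rw [h1]; exact hy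
        have habs : δ/4 ≤ |(γ 1 : E2) 1 - (γ s : E2) 1| :=
          le_trans (by linarith) (le_abs_self _)
        linarith
      calc ENNReal.ofReal (2 * dist (x : E2) (y : E2))
          ≤ ENNReal.ofReal (δ/4) + ENNReal.ofReal (δ/4) := by
            rw [← ENNReal.ofReal_add (by linarith) (by linarith)]
            exact ENNReal.ofReal_le_ofReal (by linarith)
        _ ≤ pathLengthOn (rpd ε).d γ 0 s + pathLengthOn (rpd ε).d γ s 1 := add_le_add hb1 hb2
        _ = pathLength (rpd ε).d γ := hsplit.symm
    · push_neg at hcase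
      set K' : ℝ := max K 0 with hK'def
      have hK'0 : 0 ≤ K' := le_max_right _ _
      set M : ℕ := ⌈K' * (2/δ)⌉₊ + 1 with hMdef
      have hM : 0 < M := Nat.succ_pos _
      have hMR : (0:ℝ) < M := by exact_mod_cast hM
      have hKM : K' ≤ M * (δ/2) := by
        have h1 : K' * (2/δ) ≤ (M:ℝ) := le_trans (Nat.le_ceil _)
          (by exact_mod_cast Nat.le_succ _)
        calc K' = (K' * (2/δ)) * (δ/2) := by field_simp
          _ ≤ M * (δ/2) := by
            apply mul_le_mul_of_nonneg_right h1
            linarith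
      have hustep : ∀ j : ℕ, min (((j:ℝ)+1)/M) 1 - min ((j:ℝ)/M) 1 ≤ 1/M := by
        intro j
        have hjj : (j:ℝ)/M ≤ ((j:ℝ)+1)/M := by gcongr; linarith
        rcases le_total (((j:ℝ)+1)/M) 1 with h1 | h1
        · rw [min_eq_left h1, min_eq_left (le_trans hjj h1)]
          have : ((j:ℝ)+1)/M - (j:ℝ)/M = 1/M := by ring
          linarith
        · rw [min_eq_right h1]
          rcases le_total ((j:ℝ)/M) 1 with h2 | h2
          · rw [min_eq_left h2]
            have : ((j:ℝ)+1)/M = (j:ℝ)/M + 1/M := by ring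
            linarith
          · rw [min_eq_right h2]
            simp only [sub_self]
            positivity
      set u : ℕ → ℝ := fun j => min ((j:ℝ)/M) 1 with hudef
      have hux : ∀ j : ℕ, u j = min ((j:ℝ)/M) 1 := fun _ => rfl
      have humono : Monotone u := by
        intro i j hij
        rw [hux, hux]
        have hc : (i:ℝ) ≤ (j:ℝ) := by exact_mod_cast hij
        gcongr
      have humem : ∀ j, u j ∈ Icc (0:ℝ) 1 := fun j =>
        ⟨le_min (by positivity) zero_le_one, min_le_right _ _⟩
      have hu0 : u 0 = 0 := by rw [hux]; norm_num
      have hu1 : u M = 1 := by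
        rw [hux, div_self (ne_of_gt hMR)]
        exact min_self 1
      have hustep' : ∀ j : ℕ, u (j+1) - u j ≤ 1/M := by
        intro j
        have e1 : u (j+1) = min (((j:ℝ)+1)/M) 1 := by rw [hux]; push_cast; ring_nf
        rw [e1, hux]
        exact hustep j
      have hpairdist : ∀ j : ℕ, dist (γ (u (j+1)) : E2) (γ (u j) : E2) ≤ δ/2 := by
        intro j
        have h := hK (u (j+1)) (humem _) (u j) (humem _)
        simp only [] at h
        rw [Subtype.dist_eq] at h
        refine h.trans ?_
        have hmono' : u j ≤ u (j+1) := humono (Nat.le_succ j)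
        have habs : |u (j+1) - u j| = u (j+1) - u j := abs_of_nonneg (by linarith)
        have hKK' : K ≤ K' := le_max_left _ _
        calc K * |u (j+1) - u j| ≤ K' * (1/M) := by
              rw [habs]
              apply mul_le_mul hKK' (hustep' j) (by linarith) hK'0
          _ ≤ δ/2 := by
              rw [mul_one_div, div_le_iff₀ hMR]
              linarith [hKM]
      have hpair : ∀ j : ℕ, rho ε (γ (u (j+1)) : E2) (γ (u j) : E2)
          = 2 * dist (γ (u (j+1)) : E2) (γ (u j) : E2) := by
        intro j
        apply rho_far
        have hc1 := hcase (u (j+1)) (humem _)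
        have hc2 := hcase (u j) (humem _)
        have hf1 := le_fee (ε := ε) ((γ (u (j+1)) : OΩ) : E2)
        have hf2 := le_fee (ε := ε) ((γ (u j) : OΩ) : E2)
        linarith [hpairdist j]
      have hsum := (rpd ε).sum_le_pathLengthOn γ zero_le_one humono humem M
      calc ENNReal.ofReal (2 * dist (x : E2) (y : E2))
          ≤ ENNReal.ofReal (∑ j ∈ Finset.range M,
              2 * dist (γ (u (j+1)) : E2) (γ (u j) : E2)) := by
            apply ENNReal.ofReal_le_ofReal
            have hd := dist_le_range_sum_dist (fun j => (γ (u j) : E2)) M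
            rw [hu0, hu1, h0, h1] at hd
            have e : ∑ j ∈ Finset.range M, dist (γ (u j) : E2) (γ (u (j+1)) : E2)
                = ∑ j ∈ Finset.range M, dist (γ (u (j+1)) : E2) (γ (u j) : E2) :=
              Finset.sum_congr rfl fun j _ => dist_comm _ _
            rw [e] at hd
            rw [← Finset.mul_sum]
            linarith
        _ = ∑ j ∈ Finset.range M,
              ENNReal.ofReal (2 * dist (γ (u (j+1)) : E2) (γ (u j) : E2)) :=
            ENNReal.ofReal_sum_of_nonneg (fun i _ => by positivity)
        _ = ∑ j ∈ Finset.range M,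
              ENNReal.ofReal ((rpd ε).d (γ (u (j+1))) (γ (u j))) := by
            refine Finset.sum_congr rfl fun j _ => ?_
            rw [rpd_d, hpair j]
        _ ≤ pathLengthOn (rpd ε).d γ 0 1 := hsum
        _ = pathLength (rpd ε).d γ := rfl
  have h2 := ENNReal.toReal_mono (dnE_ne_top ε x y) key
  rwa [ENNReal.toReal_ofReal (by positivity)] at h2

end DN2
noncomputable section SEQ

def epsn (n : ℕ) : ℝ := (1/8) * (1/2)^n

lemma epsn_pos (n : ℕ) : 0 < epsn n := by rw [epsn]; positivity

lemma epsn_le (n : ℕ) : epsn n ≤ 1/8 := by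
  have h : (1/2:ℝ)^n ≤ 1 := pow_le_one₀ (by norm_num) (by norm_num)
  rw [epsn]; nlinarith

lemma epsn_anti {m n : ℕ} (h : m ≤ n) : epsn n ≤ epsn m := by
  have := pow_le_pow_of_le_one (by norm_num : (0:ℝ) ≤ 1/2) (by norm_num : (1/2:ℝ) ≤ 1) h
  rw [epsn, epsn]; nlinarith

lemma epsn_small {δ : ℝ} (hδ : 0 < δ) : ∃ N, ∀ n ≥ N, epsn n ≤ δ := by
  have h := tendsto_pow_atTop_nhds_zero_of_lt_one (by norm_num : (0:ℝ) ≤ 1/2)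
    (by norm_num : (1/2:ℝ) < 1)
  have h2 : ∀ᶠ n in atTop, (1/2:ℝ)^n < 8*δ := h.eventually (gt_mem_nhds (by positivity))
  rw [eventually_atTop] at h2
  obtain ⟨N, hN⟩ := h2
  exact ⟨N, fun n hn => by have := hN n hn; rw [epsn]; linarith⟩

def dseq (n : ℕ) : OΩ → OΩ → ℝ := dnR (epsn n)

lemma dseq_mono_le {m n : ℕ} (h : m ≤ n) (x y : OΩ) : dseq m x y ≤ dseq n x y :=
  dnR_mono (epsn_anti h) x y

def dtR (x y : OΩ) : ℝ := ⨆ n, dseq n x y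

lemma dseq_bdd (x y : OΩ) : BddAbove (Set.range fun n => dseq n x y) :=
  ⟨2 * dist (x : E2) (y : E2), by rintro _ ⟨n, rfl⟩; exact dnR_le_two_dist _ x y⟩

lemma dseq_le_dtR (n : ℕ) (x y : OΩ) : dseq n x y ≤ dtR x y :=
  le_ciSup (dseq_bdd x y) n

lemma dtR_le {x y : OΩ} {c : ℝ} (h : ∀ n, dseq n x y ≤ c) : dtR x y ≤ c := ciSup_le h

lemma dtR_le_two_dist (x y : OΩ) : dtR x y ≤ 2 * dist (x : E2) (y : E2) :=
  dtR_le fun n => dnR_le_two_dist _ x y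

lemma dist_le_dtR (x y : OΩ) : dist (x : E2) (y : E2) ≤ dtR x y :=
  le_trans (dist_le_dnR (epsn 0) x y) (dseq_le_dtR 0 x y)

lemma dtR_symm (x y : OΩ) : dtR x y = dtR y x := by
  unfold dtR dseq
  exact iSup_congr fun n => dnR_symm _ x y

lemma dtR_self (x : OΩ) : dtR x x = 0 := by
  unfold dtR
  have : ∀ n, dseq n x x = 0 := fun n => dnR_self _ x
  simp [this]

lemma dtR_tri (x y z : OΩ) : dtR x z ≤ dtR x y + dtR y z :=
  dtR_le fun n => le_trans (dnR_tri _ x y z)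
    (add_le_add (dseq_le_dtR n x y) (dseq_le_dtR n y z))

lemma isDistance_dtR : IsDistance dtR := by
  refine ⟨dtR_symm, dtR_tri, fun x y => ⟨fun h => ?_, fun h => h ▸ dtR_self x⟩⟩
  have := dist_le_dtR x y
  rw [h] at this
  exact Subtype.ext (by rwa [← dist_le_zero])

lemma dseq_lip (n : ℕ) (p q : OΩ × OΩ) :
    |dseq n p.1 p.2 - dseq n q.1 q.2| ≤ 2 * dist p.1 q.1 + 2 * dist p.2 q.2 := by
  have key : ∀ a b : OΩ × OΩ, dseq n a.1 a.2 - dseq n b.1 b.2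
      ≤ 2 * dist a.1 b.1 + 2 * dist a.2 b.2 := by
    intro a b
    have h1 := dnR_tri (epsn n) a.1 b.1 a.2
    have h2 := dnR_tri (epsn n) b.1 b.2 a.2
    have h3 := dnR_le_two_dist (epsn n) a.1 b.1
    have h4 := dnR_le_two_dist (epsn n) b.2 a.2
    have h5 := dnR_symm (epsn n) b.2 a.2
    rw [← Subtype.dist_eq] at h3 h4
    unfold dseq
    rw [dist_comm a.2 b.2]
    linarith
  rw [abs_sub_le_iff]
  constructor
  · exact key p q
  · have := key q p
    rw [dist_comm q.1 p.1, dist_comm q.2 p.2] at this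
    exact this

lemma dtR_lip (p q : OΩ × OΩ) :
    |dtR p.1 p.2 - dtR q.1 q.2| ≤ 2 * dist p.1 q.1 + 2 * dist p.2 q.2 := by
  have key : ∀ a b : OΩ × OΩ, dtR a.1 a.2 - dtR b.1 b.2
      ≤ 2 * dist a.1 b.1 + 2 * dist a.2 b.2 := by
    intro a b
    rw [sub_le_iff_le_add]
    refine dtR_le fun n => ?_
    have h := abs_le.1 (dseq_lip n a b)
    have h2 := dseq_le_dtR n b.1 b.2
    linarith [h.2]
  rw [abs_sub_le_iff]
  constructor
  · exact key p q
  · have := key q p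
    rw [dist_comm q.1 p.1, dist_comm q.2 p.2] at this
    exact this

lemma dtR_point (x y : OΩ) {η : ℝ} (hη : 0 < η) : ∃ N, dtR x y - dseq N x y < η := by
  have h : dtR x y - η < dtR x y := by linarith
  obtain ⟨n, hn⟩ := exists_lt_of_lt_ciSup h
  exact ⟨n, by linarith⟩

lemma tendstoUnifCompactly_dseq : TendstoUnifCompactly dseq dtR := by
  intro Kc hKc ε hε
  have hcov : ∀ p : OΩ × OΩ, ∃ N, dtR p.1 p.2 - dseq N p.1 p.2 < ε/2 := fun p =>
    dtR_point p.1 p.2 (by positivity)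
  choose Nf hNf using hcov
  obtain ⟨t, htmem, htcov⟩ := hKc.elim_nhds_subcover (fun p => Metric.ball p (ε/16))
    (fun p _ => Metric.ball_mem_nhds p (by positivity))
  refine ⟨t.sup Nf, fun n hn p hp => ?_⟩
  obtain ⟨q, hqt, hq⟩ := Set.mem_iUnion₂.1 (htcov hp)
  rw [Metric.mem_ball] at hq
  have hd1 : dist p.1 q.1 ≤ dist p q := le_max_left _ _
  have hd2 : dist p.2 q.2 ≤ dist p q := le_max_right _ _
  have hmono : dseq (Nf q) q.1 q.2 ≤ dseq n q.1 q.2 :=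
    dseq_mono_le (le_trans (Finset.le_sup hqt) hn) q.1 q.2
  have hgap : dtR q.1 q.2 - dseq n q.1 q.2 < ε/2 := by
    have := hNf q
    linarith
  have h1 := abs_le.1 (dtR_lip p q)
  have h2 := abs_le.1 (dseq_lip n q p)
  have hle : dseq n p.1 p.2 ≤ dtR p.1 p.2 := dseq_le_dtR n p.1 p.2
  have habs : |dseq n p.1 p.2 - dtR p.1 p.2| = dtR p.1 p.2 - dseq n p.1 p.2 := by
    rw [abs_sub_comm, abs_of_nonneg (by linarith)]
  rw [habs]
  have hc1 : dist q.1 p.1 = dist p.1 q.1 := dist_comm _ _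
  have hc2 : dist q.2 p.2 = dist p.2 q.2 := dist_comm _ _
  have e1 := h1.2
  have e2 := h2.2
  rw [hc1, hc2] at e2
  linarith

end SEQ
noncomputable section GAMMA

def d2 : OΩ → OΩ → ℝ := fun x y => 2 * dist (x : E2) (y : E2)

def d2pd : PDist OΩ where
  d := d2
  refl x := by simp [d2]
  symm x y := by simp [d2, dist_comm]
  tri x y z := by
    have := dist_triangle (x : E2) (y : E2) (z : E2)
    simp only [d2]
    linarith

lemma isDistance_d2 : IsDistance d2 := by
  refine ⟨d2pd.symm, d2pd.tri, fun x y => ⟨fun h => ?_, fun h => h ▸ d2pd.refl x⟩⟩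
  rw [d2] at h
  have : dist (x : E2) (y : E2) = 0 := by linarith
  exact Subtype.ext (by rwa [← dist_eq_zero])

lemma seg_lip_d2 (x y : OΩ) : LipCurve d2 (seg x y) := by
  refine ⟨2 * dist (x : E2) (y : E2), fun s hs t ht => ?_⟩
  show d2 (seg x y s) (seg x y t) ≤ _
  rw [d2, seg_coe_dist, clamp_of_mem hs, clamp_of_mem ht]
  nlinarith [abs_nonneg (s - t), dist_nonneg (x := (x:E2)) (y := (y:E2))]

lemma pathLength_seg_d2 (x y : OΩ) :
    pathLength d2 (seg x y) ≤ ENNReal.ofReal (2 * dist (x : E2) (y : E2)) := by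
  have h2 : pathLengthOn d2 (seg x y) 0 1
      ≤ ENNReal.ofReal ((2 * dist (x : E2) (y : E2)) * (1 - 0)) := by
    refine pathLengthOn_le_mul (by positivity) zero_le_one fun s t hs ht hst => ?_
    rw [d2, seg_coe_dist, clamp_of_mem ht, clamp_of_mem hs, abs_of_nonneg (by linarith)]
    ring_nf
    exact le_refl _
  simpa [pathLength] using h2

lemma isLengthDist_d2 : IsLengthDist d2 := by
  intro x y
  apply le_antisymm
  · refine le_iInf fun γ => le_iInf fun hLip => le_iInf fun h0 => le_iInf fun h1 => ?_
    have key := d2pd.ofReal_le_pathLengthOn γ (a := 0) (b := 1) (x := 0) (y := 1)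
      zero_le_one ⟨le_rfl, zero_le_one⟩ ⟨zero_le_one, le_rfl⟩
    rw [h0, h1] at key
    exact key
  · exact iInf_le_of_le (seg x y) (iInf_le_of_le (seg_lip_d2 x y)
      (iInf_le_of_le (seg_zero x y) (iInf_le_of_le (seg_one x y) (pathLength_seg_d2 x y))))

lemma memD_d2 : MemD 2 Osq d2 := by
  refine ⟨isDistance_d2, isLengthDist_d2, fun x y => ⟨?_, le_of_eq rfl⟩⟩
  rw [d2]
  have := dist_nonneg (x := (x : E2)) (y := (y : E2))
  rw [show ((2:ℝ))⁻¹ = 1/2 by norm_num]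
  linarith

lemma memD_dseq (n : ℕ) : MemD 2 Osq (dseq n) := by
  refine ⟨isDistance_dnR _, isLengthDist_dnR _, fun x y => ⟨?_, dnR_le_two_dist _ x y⟩⟩
  have h1 := dist_le_dnR (epsn n) x y
  have := dist_nonneg (x := (x : E2)) (y := (y : E2))
  rw [show ((2:ℝ))⁻¹ = 1/2 by norm_num]
  show (1:ℝ)/2 * dist (x : E2) (y : E2) ≤ dnR (epsn n) x y
  linarith

/-- recovery sequence bound -/
lemma limsup_bound {γ : ℝ → OΩ} :
    limsup (fun n => pathLength (dseq n) γ) atTop ≤ pathLength d2 γ := by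
  rw [Filter.limsup_eq_iInf_iSup_of_nat]
  refine iInf_le_of_le 0 (iSup_le fun i => iSup_le fun _ => ?_)
  exact pathLengthOn_mono_d (fun a b => dnR_le_two_dist _ a b) γ 0 1

/-- distance of two points of the plane agreeing in the first coordinate -/
lemma dist_pts_snd {p q : E2} (h0 : p 0 = q 0) : dist p q = |p 1 - q 1| := by
  rw [EuclideanSpace.dist_eq, Fin.sum_univ_two, Real.dist_eq, Real.dist_eq, h0]
  simp only [sub_self, abs_zero]
  rw [show (0:ℝ)^2 = 0 by norm_num, zero_add, sq_abs, Real.sqrt_sq_eq_abs]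

lemma dist_pts_fst {p q : E2} (h1 : p 1 = q 1) : dist p q = |p 0 - q 0| := by
  rw [EuclideanSpace.dist_eq, Fin.sum_univ_two, Real.dist_eq, Real.dist_eq, h1]
  simp only [sub_self, abs_zero]
  rw [show (0:ℝ)^2 = 0 by norm_num, add_zero, sq_abs, Real.sqrt_sq_eq_abs]

def mkpt (a b : ℝ) : E2 := WithLp.toLp 2 (fun i : Fin 2 => if i = 0 then a else b)

lemma mkpt0 (a b : ℝ) : mkpt a b 0 = a := rfl
lemma mkpt1 (a b : ℝ) : mkpt a b 1 = b := rfl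

lemma mkpt_mem {a b : ℝ} (ha : a ∈ Ioo (0:ℝ) 1) (hb : b ∈ Ioo (0:ℝ) 1) : mkpt a b ∈ Osq :=
  ⟨ha, hb⟩

def xw : OΩ := ⟨mkpt (1/4) (1/16), mkpt_mem (by norm_num) (by norm_num)⟩
def yw : OΩ := ⟨mkpt (3/4) (1/16), mkpt_mem (by norm_num) (by norm_num)⟩

lemma dist_xw_yw : dist (xw : E2) (yw : E2) = 1/2 := by
  rw [dist_pts_fst (by rw [show ((xw : E2)) 1 = 1/16 from rfl, show ((yw : E2)) 1 = 1/16 from rfl])]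
  rw [show ((xw : E2)) 0 = 1/4 from rfl, show ((yw : E2)) 0 = 3/4 from rfl]
  rw [abs_of_nonpos (by norm_num)]
  norm_num

lemma dseq_xw_yw (n : ℕ) : dseq n xw yw ≤ 3/4 := by
  have hε0 := epsn_pos n
  have hε8 := epsn_le n
  set ε := epsn n with hεdef
  have hmem : ε/2 ∈ Ioo (0:ℝ) 1 := ⟨by linarith, by linarith⟩
  set x' : OΩ := ⟨mkpt (1/4) (ε/2), mkpt_mem (by norm_num) hmem⟩ with hx'
  set y' : OΩ := ⟨mkpt (3/4) (ε/2), mkpt_mem (by norm_num) hmem⟩ with hy'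
  have h1 : dnR ε xw x' ≤ 2 * dist (xw : E2) (x' : E2) := dnR_le_two_dist _ _ _
  have h2 : dnR ε x' y' ≤ dist (x' : E2) (y' : E2) :=
    dnR_le_dist_of_strip (by rw [hx']; show ε/2 ≤ ε; linarith) (by rw [hy']; show ε/2 ≤ ε; linarith)
  have h3 : dnR ε y' yw ≤ 2 * dist (y' : E2) (yw : E2) := dnR_le_two_dist _ _ _
  have hd1 : dist (xw : E2) (x' : E2) ≤ 1/16 := by
    rw [dist_pts_snd (by rw [hx']; rfl)]
    rw [show ((xw : E2)) 1 = 1/16 from rfl, show ((x' : E2)) 1 = ε/2 from rfl]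
    rw [abs_of_nonneg (by linarith)]
    linarith
  have hd2 : dist (x' : E2) (y' : E2) = 1/2 := by
    rw [dist_pts_fst (by rw [hx', hy']; rfl)]
    rw [show ((x' : E2)) 0 = 1/4 from rfl, show ((y' : E2)) 0 = 3/4 from rfl]
    rw [abs_of_nonpos (by norm_num)]
    norm_num
  have hd3 : dist (y' : E2) (yw : E2) ≤ 1/16 := by
    rw [dist_pts_snd (by rw [hy']; rfl)]
    rw [show ((y' : E2)) 1 = ε/2 from rfl, show ((yw : E2)) 1 = 1/16 from rfl]
    rw [abs_of_nonpos (by linarith)]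
    linarith
  have htri1 := dnR_tri ε xw x' yw
  have htri2 := dnR_tri ε x' y' yw
  show dnR ε xw yw ≤ 3/4
  linarith

lemma dtR_xw_yw : dtR xw yw ≤ 3/4 := dtR_le dseq_xw_yw

lemma dtR_ne_d2 : dtR ≠ d2 := by
  intro h
  have h1 : dtR xw yw ≤ 3/4 := dtR_xw_yw
  have h2 : d2 xw yw = 1 := by rw [d2, dist_xw_yw]; norm_num
  rw [h, h2] at h1
  norm_num at h1

end GAMMA
noncomputable section LIMINF

lemma min_step {M : ℕ} (hMR : (0:ℝ) < M) (j : ℕ) :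
    min (((j:ℝ)+1)/M) 1 - min ((j:ℝ)/M) 1 ≤ 1/M := by
  have hjj : (j:ℝ)/M ≤ ((j:ℝ)+1)/M := by gcongr; linarith
  rcases le_total (((j:ℝ)+1)/M) 1 with h1 | h1
  · rw [min_eq_left h1, min_eq_left (le_trans hjj h1)]
    have : ((j:ℝ)+1)/M - (j:ℝ)/M = 1/M := by ring
    linarith
  · rw [min_eq_right h1]
    rcases le_total ((j:ℝ)/M) 1 with h2 | h2
    · rw [min_eq_left h2]
      have : ((j:ℝ)+1)/M = (j:ℝ)/M + 1/M := by ring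
      linarith
    · rw [min_eq_right h2]
      simp only [sub_self]
      positivity

lemma min_nonneg01 {M : ℕ} (j : ℕ) : (0:ℝ) ≤ min ((j:ℝ)/M) 1 :=
  le_min (by positivity) zero_le_one

lemma block_lb {ε δ : ℝ} {γ' : ℝ → OΩ} (hLip' : LipCurve (fun a b : OΩ => dist a b) γ')
    (hδ : 0 < δ) (hε0 : 0 ≤ ε) (hε : ε ≤ δ/2)
    (hcoord : ∀ s ∈ Icc (0:ℝ) 1, δ ≤ (γ' s : E2) 1)
    {a b : ℝ} (ha : 0 ≤ a) (hab : a ≤ b) (hb : b ≤ 1) :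
    ENNReal.ofReal (2 * dist (γ' a : E2) (γ' b : E2)) ≤ pathLengthOn (dnR ε) γ' a b := by
  obtain ⟨K, hK⟩ := hLip'
  set K' : ℝ := max K 0 with hK'def
  have hK'0 : 0 ≤ K' := le_max_right _ _
  set M : ℕ := ⌈K' * (4/δ)⌉₊ + 1 with hMdef
  have hM : 0 < M := Nat.succ_pos _
  have hMR : (0:ℝ) < M := by exact_mod_cast hM
  have hKM : K' ≤ M * (δ/4) := by
    have h1 : K' * (4/δ) ≤ (M:ℝ) := le_trans (Nat.le_ceil _) (by exact_mod_cast Nat.le_succ _)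
    calc K' = (K' * (4/δ)) * (δ/4) := by field_simp
      _ ≤ M * (δ/4) := mul_le_mul_of_nonneg_right h1 (by linarith)
  set u : ℕ → ℝ := fun j => a + (min ((j:ℝ)/M) 1) * (b - a) with hudef
  have hux : ∀ j, u j = a + (min ((j:ℝ)/M) 1) * (b - a) := fun _ => rfl
  have humono : Monotone u := by
    intro i j hij
    rw [hux, hux]
    have hc : (i:ℝ) ≤ (j:ℝ) := by exact_mod_cast hij
    have hmin : min ((i:ℝ)/M) 1 ≤ min ((j:ℝ)/M) 1 := by gcongr
    nlinarith [hmin]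
  have humem : ∀ j, u j ∈ Icc a b := by
    intro j
    rw [hux]
    have h1 := min_nonneg01 (M := M) j
    have h2 : min ((j:ℝ)/M) 1 ≤ 1 := min_le_right _ _
    constructor <;> nlinarith
  have humem01 : ∀ j, u j ∈ Icc (0:ℝ) 1 := fun j =>
    ⟨le_trans ha (humem j).1, le_trans (humem j).2 hb⟩
  have hu0 : u 0 = a := by rw [hux]; norm_num
  have hu1 : u M = b := by
    rw [hux, div_self (ne_of_gt hMR), min_self]
    ring
  have hustep : ∀ j : ℕ, u (j+1) - u j ≤ (1/M) * (b - a) := by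
    intro j
    have e1 : u (j+1) = a + (min (((j:ℝ)+1)/M) 1) * (b - a) := by rw [hux]; push_cast; ring_nf
    rw [e1, hux]
    have h1 := min_step hMR j
    have hjj : (j:ℝ)/M ≤ ((j:ℝ)+1)/M := by gcongr; linarith
    have h2 : min ((j:ℝ)/M) 1 ≤ min (((j:ℝ)+1)/M) 1 := by gcongr
    nlinarith [min_nonneg01 (M := M) j]
  have hpairdist : ∀ j : ℕ, dist (γ' (u (j+1)) : E2) (γ' (u j) : E2) ≤ δ/4 := by
    intro j
    have h := hK (u (j+1)) (humem01 _) (u j) (humem01 _)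
    simp only [] at h
    rw [Subtype.dist_eq] at h
    refine h.trans ?_
    have hmono' : u j ≤ u (j+1) := humono (Nat.le_succ j)
    have habs : |u (j+1) - u j| = u (j+1) - u j := abs_of_nonneg (by linarith)
    have hKK' : K ≤ K' := le_max_left _ _
    have hstep' : u (j+1) - u j ≤ 1/M := by
      have := hustep j
      nlinarith [(show (0:ℝ) < 1/M by positivity)]
    calc K * |u (j+1) - u j| ≤ K' * (1/M) := by
          rw [habs]
          apply mul_le_mul hKK' hstep' (by linarith) hK'0
      _ ≤ δ/4 := by
          rw [mul_one_div, div_le_iff₀ hMR]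
          linarith [hKM]
  have hpair : ∀ j : ℕ, dnR ε (γ' (u (j+1))) (γ' (u j))
      = 2 * dist (γ' (u (j+1)) : E2) (γ' (u j) : E2) := by
    intro j
    refine dnR_eq_two_dist hδ hε0 hε (hcoord _ (humem01 _)) (hcoord _ (humem01 _)) ?_
    linarith [hpairdist j]
  have hsum := (dnpd ε).sum_le_pathLengthOn γ' hab humono humem M
  calc ENNReal.ofReal (2 * dist (γ' a : E2) (γ' b : E2))
      ≤ ENNReal.ofReal (∑ j ∈ Finset.range M,
          2 * dist (γ' (u (j+1)) : E2) (γ' (u j) : E2)) := by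
        apply ENNReal.ofReal_le_ofReal
        have hd := dist_le_range_sum_dist (fun j => (γ' (u j) : E2)) M
        rw [hu0, hu1] at hd
        have e : ∑ j ∈ Finset.range M, dist (γ' (u j) : E2) (γ' (u (j+1)) : E2)
            = ∑ j ∈ Finset.range M, dist (γ' (u (j+1)) : E2) (γ' (u j) : E2) :=
          Finset.sum_congr rfl fun j _ => dist_comm _ _
        rw [e] at hd
        rw [← Finset.mul_sum]
        linarith
    _ = ∑ j ∈ Finset.range M,
          ENNReal.ofReal (2 * dist (γ' (u (j+1)) : E2) (γ' (u j) : E2)) :=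
        ENNReal.ofReal_sum_of_nonneg (fun i _ => by positivity)
    _ = ∑ j ∈ Finset.range M,
          ENNReal.ofReal ((dnpd ε).d (γ' (u (j+1))) (γ' (u j))) := by
        refine Finset.sum_congr rfl fun j _ => ?_
        rw [show (dnpd ε).d = dnR ε from rfl, hpair j]
    _ ≤ pathLengthOn (dnpd ε).d γ' a b := hsum
    _ = pathLengthOn (dnR ε) γ' a b := rfl

lemma liminf_bound {γn : ℕ → ℝ → OΩ} {γ : ℝ → OΩ}
    (hLn : ∀ n, LipCurve (fun a b : OΩ => dist a b) (γn n))
    (hL : LipCurve (fun a b : OΩ => dist a b) γ)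
    (hconv : UnifConvCurves γn γ) :
    pathLength d2 γ ≤ liminf (fun n => pathLength (dseq n) (γn n)) atTop := by
  obtain ⟨K, hK⟩ := hL
  have hcont : ContinuousOn (fun s => ((γ s : OΩ) : E2) 1) (Icc (0:ℝ) 1) := by
    rw [Metric.continuousOn_iff]
    intro s hs εc hεc
    refine ⟨εc / (max K 0 + 1), by positivity, fun w hw hd => ?_⟩
    have h1 := hK w hw s hs
    simp only [] at h1
    have h2 := coord_dist (γ w : E2) (γ s : E2) 1
    rw [Subtype.dist_eq] at h1
    rw [Real.dist_eq]
    have hKle : K ≤ max K 0 := le_max_left _ _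
    have h0K : (0:ℝ) ≤ max K 0 := le_max_right _ _
    have h3 : |w - s| = dist w s := (Real.dist_eq w s).symm
    have h4 : |(γ w : E2) 1 - (γ s : E2) 1| ≤ K * |w - s| := le_trans h2 h1
    have h5 : dist w s < εc / (max K 0 + 1) := hd
    have h6 : (max K 0 + 1) * dist w s < εc := by
      rw [← lt_div_iff₀' (by positivity)]
      exact h5
    nlinarith [abs_nonneg (w - s), dist_nonneg (x := w) (y := s)]
  obtain ⟨s₀, hs₀, hmin⟩ := isCompact_Icc.exists_isMinOn (nonempty_Icc.2 zero_le_one) hcont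
  set δ₀ : ℝ := ((γ s₀ : OΩ) : E2) 1 with hδ₀def
  have hδ₀pos : 0 < δ₀ := (γ s₀).2.2.1
  have hδ₀ : ∀ s ∈ Icc (0:ℝ) 1, δ₀ ≤ (γ s : E2) 1 := fun s hs => hmin hs
  refine iSup_le fun k => iSup_le fun t => iSup_le fun ht => iSup_le fun h0 => iSup_le fun hl => ?_
  set C : ℝ := ∑ i : Fin k, 2 * dist (γ (t i.succ) : E2) (γ (t i.castSucc) : E2) with hC
  have hsum0 : ∑ i : Fin k, ENNReal.ofReal (d2 (γ (t i.succ)) (γ (t i.castSucc)))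
      = ENNReal.ofReal C := by
    rw [hC, ENNReal.ofReal_sum_of_nonneg (fun i _ => by positivity)]
    rfl
  rw [hsum0]
  refine ENNReal.le_of_forall_pos_le_add fun η hη _ => ?_
  set η' : ℝ := (η : ℝ) with hη'def
  have hη'0 : 0 < η' := hη
  set m : ℝ := min (δ₀/2) (η' / (4 * (k:ℝ) + 1)) with hmdef
  have hm0 : 0 < m := lt_min (by linarith) (by positivity)
  obtain ⟨N1, hN1⟩ := epsn_small (show 0 < δ₀/4 by linarith)
  obtain ⟨N2, hN2⟩ := hconv m hm0
  set N := max N1 N2 with hNdef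
  have key : ∀ n ≥ N, ENNReal.ofReal (C - η') ≤ pathLength (dseq n) (γn n) := by
    intro n hn
    have hcoordn : ∀ s ∈ Icc (0:ℝ) 1, δ₀/2 ≤ (γn n s : E2) 1 := by
      intro s hs
      have h1 := hN2 n (le_trans (le_max_right _ _) hn) s hs
      have h2 := coord_dist (γn n s : E2) (γ s : E2) 1
      rw [Subtype.dist_eq] at h1
      have h3 := hδ₀ s hs
      have h4 := neg_abs_le ((γn n s : E2) 1 - (γ s : E2) 1)
      have h5 : m ≤ δ₀/2 := min_le_left _ _
      linarith
    have hblock : ∀ i : Fin k,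
        ENNReal.ofReal (2 * dist (γn n (t i.castSucc) : E2) (γn n (t i.succ) : E2))
          ≤ pathLengthOn (dseq n) (γn n) (t i.castSucc) (t i.succ) := by
      intro i
      have hεn : epsn n ≤ (δ₀/2)/2 := by
        have := hN1 n (le_trans (le_max_left _ _) hn)
        linarith
      exact block_lb (hLn n) (show 0 < δ₀/2 by linarith) (epsn_pos n).le hεn hcoordn
        (partition_mem_Icc ht h0 hl i.castSucc).1 (ht (Fin.castSucc_le_succ i))
        (partition_mem_Icc ht h0 hl i.succ).2
    calc ENNReal.ofReal (C - η')
        ≤ ENNReal.ofReal (∑ i : Fin k,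
            2 * dist (γn n (t i.castSucc) : E2) (γn n (t i.succ) : E2)) := by
          apply ENNReal.ofReal_le_ofReal
          have hterm : ∀ i : Fin k,
              2 * dist (γ (t i.succ) : E2) (γ (t i.castSucc) : E2) - 4 * m
              ≤ 2 * dist (γn n (t i.castSucc) : E2) (γn n (t i.succ) : E2) := by
            intro i
            have e1 := hN2 n (le_trans (le_max_right _ _) hn) (t i.succ)
              (partition_mem_Icc ht h0 hl i.succ)
            have e2 := hN2 n (le_trans (le_max_right _ _) hn) (t i.castSucc)
              (partition_mem_Icc ht h0 hl i.castSucc)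
            rw [Subtype.dist_eq] at e1 e2
            have tri := dist_triangle4 (γ (t i.succ) : E2) (γn n (t i.succ) : E2)
              (γn n (t i.castSucc) : E2) (γ (t i.castSucc) : E2)
            have hq1 : dist (γ (t i.succ) : E2) (γn n (t i.succ) : E2)
                = dist (γn n (t i.succ) : E2) (γ (t i.succ) : E2) := dist_comm _ _
            have hq2 : dist (γn n (t i.succ) : E2) (γn n (t i.castSucc) : E2)
                = dist (γn n (t i.castSucc) : E2) (γn n (t i.succ) : E2) := dist_comm _ _
            linarith
          have hsum2 := Finset.sum_le_sum (fun i (_ : i ∈ Finset.univ) => hterm i)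
          rw [Finset.sum_sub_distrib, Finset.sum_const, Finset.card_univ, Fintype.card_fin] at hsum2
          have hmk : k • (4 * m) ≤ η' := by
            rw [nsmul_eq_mul]
            have h1 : m ≤ η' / (4 * (k:ℝ) + 1) := min_le_right _ _
            have hk0 : (0:ℝ) ≤ (k:ℝ) := Nat.cast_nonneg k
            have h2 : (k:ℝ) * (4 * m) ≤ (k:ℝ) * (4 * (η' / (4 * (k:ℝ) + 1))) := by
              apply mul_le_mul_of_nonneg_left _ hk0
              linarith
            have h3 : (k:ℝ) * (4 * (η' / (4 * (k:ℝ) + 1))) = (4 * k * η') / (4 * (k:ℝ) + 1) := by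
              ring
            have h4 : (4 * (k:ℝ) * η') / (4 * (k:ℝ) + 1) ≤ η' := by
              rw [div_le_iff₀ (by positivity)]
              nlinarith
            linarith
          rw [hC]
          linarith
      _ = ∑ i : Fin k, ENNReal.ofReal
            (2 * dist (γn n (t i.castSucc) : E2) (γn n (t i.succ) : E2)) :=
          ENNReal.ofReal_sum_of_nonneg (fun i _ => by positivity)
      _ ≤ ∑ i : Fin k, pathLengthOn (dseq n) (γn n) (t i.castSucc) (t i.succ) :=
          Finset.sum_le_sum (fun i _ => hblock i)
      _ ≤ pathLengthOn (dseq n) (γn n) (t 0) (t (Fin.last k)) :=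
          (dnpd (epsn n)).sum_blocks (γn n) ht
      _ = pathLength (dseq n) (γn n) := by rw [h0, hl]; rfl
  have hlim : ENNReal.ofReal (C - η') ≤ liminf (fun n => pathLength (dseq n) (γn n)) atTop := by
    rw [Filter.liminf_eq_iSup_iInf_of_nat]
    exact le_iSup_of_le N (le_iInf fun i => le_iInf fun hi => key i hi)
  calc ENNReal.ofReal C ≤ ENNReal.ofReal ((C - η') + η') :=
        ENNReal.ofReal_le_ofReal (by linarith)
    _ ≤ ENNReal.ofReal (C - η') + ENNReal.ofReal η' := ENNReal.ofReal_add_le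
    _ ≤ liminf (fun n => pathLength (dseq n) (γn n)) atTop + η := by
        refine add_le_add hlim (le_of_eq ?_)
        rw [hη'def, ENNReal.ofReal_coe_nnreal]

end LIMINF
/-- on the open unit square `Ω = (0,1)²` with `d = 2 d_Eucl ∈ 𝒟₂(Ω)`,
there are a nondecreasing sequence `(dn) ⊆ 𝒟₂(Ω)` and a distance `d̃ ≠ d` such that
`dn → d̃` uniformly on compact sets while `L_{dn}` Γ-converges to `L_d` on
`Lip([0,1]; Ω)`. -/
theorem stmt11 (Ω : Set (EuclideanSpace ℝ (Fin 2)))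
    (hΩ : Ω = {p : EuclideanSpace ℝ (Fin 2) | p 0 ∈ Ioo (0 : ℝ) 1 ∧ p 1 ∈ Ioo (0 : ℝ) 1})
    (d : Ω → Ω → ℝ)
    (hd : ∀ x y : Ω,
      d x y = 2 * dist (x : EuclideanSpace ℝ (Fin 2)) (y : EuclideanSpace ℝ (Fin 2))) :
    MemD 2 Ω d ∧
    ∃ dn : ℕ → Ω → Ω → ℝ, (∀ n, MemD 2 Ω (dn n)) ∧
      (∀ n, ∀ x y : Ω, dn n x y ≤ dn (n + 1) x y) ∧
      ∃ dt : Ω → Ω → ℝ, IsDistance dt ∧ dt ≠ d ∧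
        TendstoUnifCompactly dn dt ∧ GammaConvLengths dn d := by
  have hΩ' : Ω = Osq := hΩ
  subst hΩ'
  have hd' : d = d2 := funext fun x => funext fun y => hd x y
  subst hd'
  refine ⟨memD_d2, dseq, fun n => memD_dseq n,
    fun n x y => dseq_mono_le (Nat.le_succ n) x y,
    dtR, isDistance_dtR, dtR_ne_d2, tendstoUnifCompactly_dseq, ?_, ?_⟩
  · exact fun γn γ h1 h2 h3 => liminf_bound h1 h2 h3
  · intro γ hγ
    refine ⟨fun _ => γ, fun _ => hγ, fun ε hε => ⟨0, fun n _ t _ => ?_⟩, limsup_bound⟩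
    rw [dist_self]
    exact hε
end

section
/- There exists an open set Ω ⊆ ℝ² such that D_2(Ω, d_Eucl) is nonempty and not sequentially compact; more precisely, there exists a sequence (d_n)_{n∈ℕ} ⊆ D_2(Ω, d_Eucl) admitting no subsequence that converges, uniformly on compact subsets of Ω × Ω, to an element of D_2(Ω, d_Eucl). -/
open Filter MeasureTheory Set
open scoped ENNReal Topology

namespace Stmt12Aux

noncomputable section


abbrev E2 := EuclideanSpace ℝ (Fin 2)
def pt2 (a b : ℝ) : E2 := (WithLp.equiv 2 (Fin 2 → ℝ)).symm ![a, b]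
@[simp] lemma pt2_zero (a b : ℝ) : pt2 a b 0 = a := by simp [pt2]
@[simp] lemma pt2_one (a b : ℝ) : pt2 a b 1 = b := by simp [pt2]
lemma pt2_eta (P : E2) : pt2 (P 0) (P 1) = P := by
  apply (WithLp.equiv 2 (Fin 2 → ℝ)).injective
  ext i
  fin_cases i <;> simp [pt2]
lemma dist_e2 (u v : E2) :
    dist u v = Real.sqrt ((u 0 - v 0)^2 + (u 1 - v 1)^2) := by
  rw [EuclideanSpace.dist_eq, Fin.sum_univ_two, Real.dist_eq, Real.dist_eq, sq_abs, sq_abs]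
lemma dist_pt2_horiz (s t h : ℝ) : dist (pt2 s h) (pt2 t h) = |s - t| := by
  rw [dist_e2]; simp [Real.sqrt_sq_eq_abs]
lemma dist_pt2_vert (a b c : ℝ) : dist (pt2 a b) (pt2 a c) = |b - c| := by
  rw [dist_e2]; simp [Real.sqrt_sq_eq_abs]
lemma abs_coord_le_dist (x y : E2) (i : Fin 2) : |x i - y i| ≤ dist x y := by
  rw [EuclideanSpace.dist_eq]
  have h1 : |x i - y i| = Real.sqrt (dist (x i) (y i) ^ 2) := by
    rw [Real.sqrt_sq dist_nonneg, Real.dist_eq]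
  rw [h1]
  apply Real.sqrt_le_sqrt
  exact Finset.single_le_sum (f := fun j => dist (x j) (y j) ^ 2)
    (fun j _ => sq_nonneg _) (Finset.mem_univ i)

-- the candidate distances
def lineSet (h : ℝ) (P Q : E2) : Set ℝ :=
  {v | ∃ s t : ℝ, v = dist P (pt2 s h) + 2⁻¹ * dist (pt2 s h) (pt2 t h) + dist (pt2 t h) Q}
def lineCost (h : ℝ) (P Q : E2) : ℝ := sInf (lineSet h P Q)
def dmin (h : ℝ) (P Q : E2) : ℝ := min (dist P Q) (lineCost h P Q)

lemma lineSet_nonempty (h : ℝ) (P Q : E2) : (lineSet h P Q).Nonempty := ⟨_, 0, 0, rfl⟩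
lemma lineSet_lb (h : ℝ) (P Q : E2) : ∀ v ∈ lineSet h P Q, 2⁻¹ * dist P Q ≤ v := by
  rintro v ⟨s, t, rfl⟩
  have h1 := dist_triangle P (pt2 s h) Q
  have h2 := dist_triangle (pt2 s h) (pt2 t h) Q
  have h3 : (0:ℝ) ≤ dist P (pt2 s h) := dist_nonneg
  have h4 : (0:ℝ) ≤ dist (pt2 t h) Q := dist_nonneg
  linarith
lemma lineSet_bdd (h : ℝ) (P Q : E2) : BddBelow (lineSet h P Q) := ⟨_, lineSet_lb h P Q⟩
lemma half_dist_le_lineCost (h : ℝ) (P Q : E2) : 2⁻¹ * dist P Q ≤ lineCost h P Q :=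
  le_csInf (lineSet_nonempty h P Q) (lineSet_lb h P Q)
lemma lineCost_le (h : ℝ) (P Q : E2) (s t : ℝ) :
    lineCost h P Q ≤ dist P (pt2 s h) + 2⁻¹ * dist (pt2 s h) (pt2 t h) + dist (pt2 t h) Q :=
  csInf_le (lineSet_bdd h P Q) ⟨s, t, rfl⟩
lemma lineCost_nonneg (h : ℝ) (P Q : E2) : 0 ≤ lineCost h P Q := by
  have h1 := half_dist_le_lineCost h P Q
  have h2 : (0:ℝ) ≤ dist P Q := dist_nonneg
  linarith
lemma half_dist_le_dmin (h : ℝ) (P Q : E2) : 2⁻¹ * dist P Q ≤ dmin h P Q :=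
  le_min (by have : (0:ℝ) ≤ dist P Q := dist_nonneg; linarith) (half_dist_le_lineCost h P Q)
lemma dmin_le_dist (h : ℝ) (P Q : E2) : dmin h P Q ≤ dist P Q := min_le_left _ _
lemma dmin_le_lineCost (h : ℝ) (P Q : E2) : dmin h P Q ≤ lineCost h P Q := min_le_right _ _
lemma dmin_nonneg (h : ℝ) (P Q : E2) : 0 ≤ dmin h P Q := by
  have h1 := half_dist_le_dmin h P Q
  have h2 : (0:ℝ) ≤ dist P Q := dist_nonneg
  linarith

lemma lineCost_comm (h : ℝ) (P Q : E2) : lineCost h P Q = lineCost h Q P := by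
  unfold lineCost
  congr 1
  ext v
  constructor
  · rintro ⟨s, t, rfl⟩
    exact ⟨t, s, by rw [dist_comm P, dist_comm (pt2 s h) (pt2 t h), dist_comm (pt2 t h) Q]; ring⟩
  · rintro ⟨s, t, rfl⟩
    exact ⟨t, s, by rw [dist_comm Q, dist_comm (pt2 s h) (pt2 t h), dist_comm (pt2 t h) P]; ring⟩
lemma dmin_comm (h : ℝ) (P Q : E2) : dmin h P Q = dmin h Q P := by
  unfold dmin; rw [dist_comm, lineCost_comm]

lemma lineCost_le_dist_add (h : ℝ) (P R Q : E2) :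
    lineCost h P Q ≤ dist P R + lineCost h R Q := by
  rw [← sub_le_iff_le_add']
  apply le_csInf (lineSet_nonempty h R Q)
  rintro w ⟨s, t, rfl⟩
  have h1 := lineCost_le h P Q s t
  have h2 := dist_triangle P R (pt2 s h)
  linarith
lemma lineCost_le_add_dist (h : ℝ) (P R Q : E2) :
    lineCost h P Q ≤ lineCost h P R + dist R Q := by
  rw [← sub_le_iff_le_add]
  apply le_csInf (lineSet_nonempty h P R)
  rintro w ⟨s, t, rfl⟩
  have h1 := lineCost_le h P Q s t
  have h2 := dist_triangle (pt2 t h) R Q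
  linarith
lemma lineCost_triangle (h : ℝ) (P R Q : E2) :
    lineCost h P Q ≤ lineCost h P R + lineCost h R Q := by
  have key : ∀ v ∈ lineSet h P R, ∀ w ∈ lineSet h R Q, lineCost h P Q ≤ v + w := by
    rintro v ⟨s, t, rfl⟩ w ⟨s', t', rfl⟩
    have h1 := lineCost_le h P Q s t'
    have h2 := dist_triangle4 (pt2 s h) (pt2 t h) (pt2 s' h) (pt2 t' h)
    have h3 := dist_triangle (pt2 t h) R (pt2 s' h)
    have h4 : (0:ℝ) ≤ dist (pt2 t h) R := dist_nonneg
    have h5 : (0:ℝ) ≤ dist R (pt2 s' h) := dist_nonneg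
    linarith
  have step : ∀ v ∈ lineSet h P R, lineCost h P Q ≤ v + lineCost h R Q := by
    intro v hv
    rw [← sub_le_iff_le_add']
    apply le_csInf (lineSet_nonempty h R Q)
    intro w hw
    have := key v hv w hw
    linarith
  rw [← sub_le_iff_le_add]
  apply le_csInf (lineSet_nonempty h P R)
  intro v hv
  have := step v hv
  linarith
lemma dmin_triangle (h : ℝ) (P R Q : E2) : dmin h P Q ≤ dmin h P R + dmin h R Q := by
  rcases min_cases (dist P R) (lineCost h P R) with ⟨e1, -⟩ | ⟨e1, -⟩ <;>
    rcases min_cases (dist R Q) (lineCost h R Q) with ⟨e2, -⟩ | ⟨e2, -⟩ <;>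
      unfold dmin <;> rw [show min (dist P R) (lineCost h P R) = _ from e1,
        show min (dist R Q) (lineCost h R Q) = _ from e2]
  · exact le_trans (min_le_left _ _) (dist_triangle P R Q)
  · exact le_trans (min_le_right _ _) (lineCost_le_dist_add h P R Q)
  · exact le_trans (min_le_right _ _) (lineCost_le_add_dist h P R Q)
  · exact le_trans (min_le_right _ _) (lineCost_triangle h P R Q)

lemma lineCost_shift {h : ℝ} (hh : 0 ≤ h) (P Q : E2) :
    |lineCost h P Q - lineCost 0 P Q| ≤ 2 * h := by
  have e2 : ∀ s : ℝ, dist (pt2 s 0) (pt2 s h) = h := by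
    intro s; rw [dist_pt2_vert, zero_sub, abs_neg, abs_of_nonneg hh]
  have A : lineCost h P Q ≤ lineCost 0 P Q + 2 * h := by
    rw [← sub_le_iff_le_add]
    apply le_csInf (lineSet_nonempty 0 P Q)
    rintro v ⟨s, t, rfl⟩
    have h1 := lineCost_le h P Q s t
    have e1 : dist (pt2 s h) (pt2 t h) = dist (pt2 s 0) (pt2 t 0) := by
      rw [dist_pt2_horiz, dist_pt2_horiz]
    have h2 := dist_triangle P (pt2 s 0) (pt2 s h)
    have h3 := dist_triangle (pt2 t h) (pt2 t 0) Q
    have h4 := e2 s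
    have h5 : dist (pt2 t h) (pt2 t 0) = h := by
      rw [dist_pt2_vert, sub_zero, abs_of_nonneg hh]
    rw [e1] at h1
    linarith
  have B : lineCost 0 P Q ≤ lineCost h P Q + 2 * h := by
    rw [← sub_le_iff_le_add]
    apply le_csInf (lineSet_nonempty h P Q)
    rintro v ⟨s, t, rfl⟩
    have h1 := lineCost_le 0 P Q s t
    have e1 : dist (pt2 s 0) (pt2 t 0) = dist (pt2 s h) (pt2 t h) := by
      rw [dist_pt2_horiz, dist_pt2_horiz]
    have h2 := dist_triangle P (pt2 s h) (pt2 s 0)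
    have h3 := dist_triangle (pt2 t 0) (pt2 t h) Q
    have h4 := e2 s
    have h5 : dist (pt2 t 0) (pt2 t h) = h := by
      rw [dist_pt2_vert, abs_of_nonpos (by linarith), neg_sub, sub_zero]
    rw [e1] at h1
    have h6 : dist (pt2 s h) (pt2 s 0) = h := by rw [dist_comm]; exact e2 s
    linarith
  rw [abs_le]
  constructor <;> linarith

lemma abs_min_sub_min (a b c : ℝ) : |min a b - min a c| ≤ |b - c| := by
  have h1 : b - c ≤ |b - c| := le_abs_self _
  have h2 : -|b - c| ≤ b - c := neg_abs_le _
  rw [abs_le]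
  rcases min_cases a b with ⟨e1, f1⟩ | ⟨e1, f1⟩ <;> rcases min_cases a c with ⟨e2, f2⟩ | ⟨e2, f2⟩ <;>
    rw [e1, e2] <;> constructor <;> linarith

lemma dmin_shift {h : ℝ} (hh : 0 ≤ h) (P Q : E2) :
    |dmin h P Q - dmin 0 P Q| ≤ 2 * h :=
  le_trans (abs_min_sub_min (dist P Q) _ _) (lineCost_shift hh P Q)

lemma lineCost_le_half {h : ℝ} (P Q : E2) (hP : P 1 = h) (hQ : Q 1 = h) :
    lineCost h P Q ≤ 2⁻¹ * dist P Q := by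
  have h1 := lineCost_le h P Q (P 0) (Q 0)
  have e1 : pt2 (P 0) h = P := by rw [← hP]; exact pt2_eta P
  have e2 : pt2 (Q 0) h = Q := by rw [← hQ]; exact pt2_eta Q
  rw [e1, e2] at h1
  simpa using h1

lemma dist_le_lineCost_zero (P Q : E2) (hPQ : dist P Q ≤ P 1 + Q 1) :
    dist P Q ≤ lineCost 0 P Q := by
  apply le_csInf (lineSet_nonempty 0 P Q)
  rintro v ⟨s, t, rfl⟩
  have h1 : |P 1 - pt2 s 0 1| ≤ dist P (pt2 s 0) := abs_coord_le_dist _ _ 1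
  have h2 : |pt2 t 0 1 - Q 1| ≤ dist (pt2 t 0) Q := abs_coord_le_dist _ _ 1
  rw [pt2_one, sub_zero] at h1
  rw [pt2_one, zero_sub, abs_neg] at h2
  have h3 : P 1 ≤ |P 1| := le_abs_self _
  have h4 : Q 1 ≤ |Q 1| := le_abs_self _
  have h5 : (0:ℝ) ≤ dist (pt2 s 0) (pt2 t 0) := dist_nonneg
  linarith

section PathLemmas
variable {X : Type*}

lemma fin_telescope {k : ℕ} (t : Fin (k+1) → ℝ) :
    ∑ i : Fin k, (t i.succ - t i.castSucc) = t (Fin.last k) - t 0 := by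
  induction k with
  | zero => simp
  | succ k ih =>
    rw [Fin.sum_univ_castSucc]
    have h := ih (fun j : Fin (k+1) => t j.castSucc)
    simp only [Fin.succ_castSucc] at h ⊢
    rw [h, Fin.succ_last, Fin.castSucc_zero]
    ring

lemma dist_le_chain {Y : Type*} [PseudoMetricSpace Y] (k : ℕ) (f : Fin (k+1) → Y) :
    dist (f (Fin.last k)) (f 0) ≤ ∑ i : Fin k, dist (f i.succ) (f i.castSucc) := by
  induction k with
  | zero => simp [Fin.last]
  | succ k ih =>
    rw [Fin.sum_univ_castSucc]
    have h := ih (fun j : Fin (k+1) => f j.castSucc)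
    simp only [Fin.succ_castSucc] at h ⊢
    have htri : dist (f (Fin.last (k+1))) (f 0) ≤
        dist (f (Fin.last (k+1))) (f ((Fin.last k).castSucc))
        + dist (f ((Fin.last k).castSucc)) (f 0) := dist_triangle _ _ _
    have e1 : (Fin.last k).succ = Fin.last (k+1) := Fin.succ_last k
    have e2 : ((0 : Fin (k+1)).castSucc) = (0 : Fin (k+2)) := Fin.castSucc_zero
    rw [e1]
    rw [e2] at h
    linarith

lemma le_pathLengthOn (d : X → X → ℝ) (γ : ℝ → X) {a b : ℝ} (hab : a ≤ b) :
    ENNReal.ofReal (d (γ b) (γ a)) ≤ pathLengthOn d γ a b := by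
  have hmono : Monotone ![a, b] := by
    intro i j hij
    fin_cases i <;> fin_cases j <;> simp_all [Fin.le_def]
  have h0 : ![a, b] 0 = a := rfl
  have hl : ![a, b] (Fin.last 1) = b := rfl
  refine le_trans ?_ (le_iSup_of_le 1 (le_iSup_of_le ![a, b]
    (le_iSup_of_le hmono (le_iSup_of_le h0 (le_iSup_of_le hl le_rfl)))))
  rw [Fin.sum_univ_one]
  apply le_of_eq
  congr 1

lemma pathLengthOn_le_of_bound (d : X → X → ℝ) (γ : ℝ → X) {a b C : ℝ}
    (hC : 0 ≤ C)
    (hbd : ∀ s t, a ≤ s → s ≤ t → t ≤ b → d (γ t) (γ s) ≤ C * (t - s)) :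
    pathLengthOn d γ a b ≤ ENNReal.ofReal (C * (b - a)) := by
  apply iSup_le; intro k; apply iSup_le; intro t; apply iSup_le; intro hmono
  apply iSup_le; intro h0; apply iSup_le; intro hl
  have hmem : ∀ i : Fin (k+1), a ≤ t i ∧ t i ≤ b := by
    intro i
    constructor
    · rw [← h0]; exact hmono (Fin.zero_le i)
    · rw [← hl]; exact hmono (Fin.le_last i)
  calc ∑ i : Fin k, ENNReal.ofReal (d (γ (t i.succ)) (γ (t i.castSucc)))
      ≤ ∑ i : Fin k, ENNReal.ofReal (C * (t i.succ - t i.castSucc)) := by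
        apply Finset.sum_le_sum; intro i _
        apply ENNReal.ofReal_le_ofReal
        exact hbd _ _ (hmem i.castSucc).1 (hmono (Fin.castSucc_le_succ i)) (hmem i.succ).2
    _ = ENNReal.ofReal (∑ i : Fin k, C * (t i.succ - t i.castSucc)) := by
        rw [ENNReal.ofReal_sum_of_nonneg]
        intro i _
        have : t i.castSucc ≤ t i.succ := hmono (Fin.castSucc_le_succ i)
        have := sub_nonneg.2 this
        positivity
    _ = ENNReal.ofReal (C * (b - a)) := by rw [← Finset.mul_sum, fin_telescope, h0, hl]

lemma pathLengthOn_split (d : X → X → ℝ) (γ : ℝ → X) {a m b : ℝ}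
    (ham : a ≤ m) (hmb : m ≤ b)
    (htri : ∀ x y z, d x z ≤ d x y + d y z) :
    pathLengthOn d γ a b ≤ pathLengthOn d γ a m + pathLengthOn d γ m b := by
  apply iSup_le; intro k; apply iSup_le; intro t; apply iSup_le; intro hmono
  apply iSup_le; intro h0; apply iSup_le; intro hl
  have key : ∀ i : Fin k, ENNReal.ofReal (d (γ (t i.succ)) (γ (t i.castSucc))) ≤
      ENNReal.ofReal (d (γ (min (t i.succ) m)) (γ (min (t i.castSucc) m)))
      + ENNReal.ofReal (d (γ (max (t i.succ) m)) (γ (max (t i.castSucc) m))) := by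
    intro i
    have hle : t i.castSucc ≤ t i.succ := hmono (Fin.castSucc_le_succ i)
    rcases le_total (t i.succ) m with hc | hc
    · rw [min_eq_left hc, min_eq_left (le_trans hle hc)]
      exact le_self_add
    · rcases le_total m (t i.castSucc) with hc' | hc'
      · rw [max_eq_left hc, max_eq_left hc']
        exact le_add_self
      · rw [min_eq_right hc, min_eq_left hc', max_eq_left hc, max_eq_right hc']
        calc ENNReal.ofReal (d (γ (t i.succ)) (γ (t i.castSucc)))
            ≤ ENNReal.ofReal (d (γ (t i.succ)) (γ m) + d (γ m) (γ (t i.castSucc))) :=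
              ENNReal.ofReal_le_ofReal (htri _ _ _)
          _ ≤ ENNReal.ofReal (d (γ (t i.succ)) (γ m))
              + ENNReal.ofReal (d (γ m) (γ (t i.castSucc))) := ENNReal.ofReal_add_le
          _ = _ := by rw [add_comm]
  calc ∑ i : Fin k, ENNReal.ofReal (d (γ (t i.succ)) (γ (t i.castSucc)))
      ≤ ∑ i : Fin k, (ENNReal.ofReal (d (γ (min (t i.succ) m)) (γ (min (t i.castSucc) m)))
          + ENNReal.ofReal (d (γ (max (t i.succ) m)) (γ (max (t i.castSucc) m)))) :=
        Finset.sum_le_sum fun i _ => key i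
    _ = (∑ i : Fin k, ENNReal.ofReal (d (γ (min (t i.succ) m)) (γ (min (t i.castSucc) m))))
        + ∑ i : Fin k, ENNReal.ofReal (d (γ (max (t i.succ) m)) (γ (max (t i.castSucc) m))) :=
        Finset.sum_add_distrib
    _ ≤ pathLengthOn d γ a m + pathLengthOn d γ m b := by
        apply add_le_add
        · exact le_iSup_of_le k (le_iSup_of_le (fun i => min (t i) m)
            (le_iSup_of_le (hmono.min monotone_const)
            (le_iSup_of_le (show min (t 0) m = a by rw [h0]; exact min_eq_left ham)
            (le_iSup_of_le (show min (t (Fin.last k)) m = m by rw [hl]; exact min_eq_right hmb) le_rfl))))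
        · exact le_iSup_of_le k (le_iSup_of_le (fun i => max (t i) m)
            (le_iSup_of_le (hmono.max monotone_const)
            (le_iSup_of_le (show max (t 0) m = m by rw [h0]; exact max_eq_right ham)
            (le_iSup_of_le (show max (t (Fin.last k)) m = b by rw [hl]; exact max_eq_left hmb) le_rfl))))

end PathLemmas

-- clamp and segments
def clamp (c : ℝ) : ℝ := max 0 (min 1 c)
lemma clamp_nonneg (c : ℝ) : 0 ≤ clamp c := le_max_left _ _
lemma clamp_le_one (c : ℝ) : clamp c ≤ 1 := max_le zero_le_one (min_le_left _ _)
lemma clamp_of_mem {c : ℝ} (h0 : 0 ≤ c) (h1 : c ≤ 1) : clamp c = c := by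
  unfold clamp; rw [min_eq_right h1, max_eq_right h0]
lemma abs_min_sub_min' (a b c : ℝ) : |min a b - min a c| ≤ |b - c| := by
  have h1 : b - c ≤ |b - c| := le_abs_self _
  have h2 : -|b - c| ≤ b - c := neg_abs_le _
  rw [abs_le]
  rcases min_cases a b with ⟨e1, f1⟩ | ⟨e1, f1⟩ <;> rcases min_cases a c with ⟨e2, f2⟩ | ⟨e2, f2⟩ <;>
    rw [e1, e2] <;> constructor <;> linarith
lemma clamp_lip (a b : ℝ) : |clamp a - clamp b| ≤ |a - b| := by
  unfold clamp
  have h1 : |max 0 (min 1 a) - max 0 (min 1 b)| ≤ |min 1 a - min 1 b| := by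
    rw [max_comm 0 (min 1 a), max_comm 0 (min 1 b)]
    exact abs_max_sub_max_le_abs _ _ _
  exact le_trans h1 (abs_min_sub_min' 1 a b)

def seg (U V : E2) (c : ℝ) : E2 := U + clamp c • (V - U)
lemma seg_zero (U V : E2) : seg U V 0 = U := by
  unfold seg
  rw [clamp_of_mem le_rfl zero_le_one, zero_smul, add_zero]
lemma seg_one (U V : E2) : seg U V 1 = V := by
  unfold seg
  rw [clamp_of_mem zero_le_one le_rfl, one_smul]
  abel
lemma seg_apply1 (U V : E2) (c : ℝ) : seg U V c 1 = U 1 + clamp c * (V 1 - U 1) := by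
  unfold seg
  rw [PiLp.add_apply, PiLp.smul_apply, PiLp.sub_apply, smul_eq_mul]
lemma seg_mem {U V : E2} (hU : 0 < U 1) (hV : 0 < V 1) (c : ℝ) : 0 < seg U V c 1 := by
  rw [seg_apply1]
  have h1 := clamp_nonneg c
  have h2 := clamp_le_one c
  have key : min (U 1) (V 1) ≤ U 1 + clamp c * (V 1 - U 1) := by
    rcases le_total (U 1) (V 1) with hle | hle
    · rw [min_eq_left hle]
      nlinarith [mul_nonneg h1 (sub_nonneg.2 hle)]
    · rw [min_eq_right hle]
      nlinarith [mul_nonneg (sub_nonneg.2 h2) (sub_nonneg.2 hle)]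
  have hpos : 0 < min (U 1) (V 1) := lt_min hU hV
  linarith
lemma dist_seg_seg (U V : E2) (c c' : ℝ) :
    dist (seg U V c) (seg U V c') = |clamp c - clamp c'| * dist U V := by
  rw [dist_eq_norm]
  have e : seg U V c - seg U V c' = (clamp c - clamp c') • (V - U) := by
    unfold seg
    rw [sub_smul]
    abel
  rw [e, norm_smul, Real.norm_eq_abs, dist_eq_norm, norm_sub_rev]
lemma dist_seg_le (U V : E2) (c c' : ℝ) :
    dist (seg U V c) (seg U V c') ≤ |c - c'| * dist U V :=
  (dist_seg_seg U V c c').le.trans (mul_le_mul_of_nonneg_right (clamp_lip c c') dist_nonneg)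

-- the domain
def Hup : Set E2 := {p : E2 | 0 < p 1}
lemma isOpen_Hup : IsOpen Hup := by
  have h : Continuous (fun p : E2 => p 1) :=
    (continuous_apply (1 : Fin 2)).comp (PiLp.continuous_ofLp 2 (fun _ : Fin 2 => ℝ))
  exact isOpen_lt continuous_const h

def dOm (h : ℝ) (x y : ↥Hup) : ℝ := dmin h x.1 y.1

lemma dOm_le_dist (h : ℝ) (x y : ↥Hup) : dOm h x y ≤ dist x.1 y.1 := dmin_le_dist h x.1 y.1
lemma dOm_comm (h : ℝ) (x y : ↥Hup) : dOm h x y = dOm h y x := dmin_comm h x.1 y.1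
lemma dOm_le_lineCost (h : ℝ) (x y : ↥Hup) : dOm h x y ≤ lineCost h x.1 y.1 :=
  dmin_le_lineCost h x.1 y.1

lemma le_iInf_pathLength (h : ℝ) (x y : ↥Hup) :
    ENNReal.ofReal (dOm h x y) ≤
      ⨅ (γ : ℝ → ↥Hup) (_ : LipCurve (dOm h) γ) (_ : γ 0 = x) (_ : γ 1 = y),
        pathLength (dOm h) γ := by
  apply le_iInf; intro γ; apply le_iInf; intro _; apply le_iInf; intro h0; apply le_iInf; intro h1
  have hle := le_pathLengthOn (dOm h) γ (zero_le_one (α := ℝ))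
  rw [h0, h1] at hle
  rw [dOm_comm]
  exact hle

lemma iInf_le_straight (h : ℝ) (x y : ↥Hup) :
    (⨅ (γ : ℝ → ↥Hup) (_ : LipCurve (dOm h) γ) (_ : γ 0 = x) (_ : γ 1 = y),
        pathLength (dOm h) γ) ≤ ENNReal.ofReal (dist x.1 y.1) := by
  have hmem : ∀ c : ℝ, 0 < seg x.1 y.1 c 1 := seg_mem x.2 y.2
  set γ : ℝ → ↥Hup := fun c => ⟨seg x.1 y.1 c, hmem c⟩ with hγ
  have h0 : γ 0 = x := Subtype.ext (seg_zero x.1 y.1)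
  have h1 : γ 1 = y := Subtype.ext (seg_one x.1 y.1)
  have hlip : LipCurve (dOm h) γ := by
    refine ⟨dist x.1 y.1, fun s _ t _ => ?_⟩
    calc dOm h (γ s) (γ t) ≤ dist (seg x.1 y.1 s) (seg x.1 y.1 t) := dOm_le_dist h _ _
      _ ≤ |s - t| * dist x.1 y.1 := dist_seg_le _ _ _ _
      _ = dist x.1 y.1 * |s - t| := mul_comm _ _
  have hbd : ∀ s t : ℝ, 0 ≤ s → s ≤ t → t ≤ 1 →
      dOm h (γ t) (γ s) ≤ dist x.1 y.1 * (t - s) := by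
    intro s t hs hst ht
    calc dOm h (γ t) (γ s) ≤ dist (seg x.1 y.1 t) (seg x.1 y.1 s) := dOm_le_dist h _ _
      _ = |clamp t - clamp s| * dist x.1 y.1 := dist_seg_seg _ _ _ _
      _ = dist x.1 y.1 * (t - s) := by
          rw [clamp_of_mem (le_trans hs hst) ht, clamp_of_mem hs (le_trans hst ht),
            abs_of_nonneg (sub_nonneg.2 hst)]
          ring
  have hlen : pathLength (dOm h) γ ≤ ENNReal.ofReal (dist x.1 y.1) := by
    have hb := pathLengthOn_le_of_bound (dOm h) γ (a := 0) (b := 1) dist_nonneg hbd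
    calc pathLength (dOm h) γ = pathLengthOn (dOm h) γ 0 1 := rfl
      _ ≤ ENNReal.ofReal (dist x.1 y.1 * (1 - 0)) := hb
      _ = ENNReal.ofReal (dist x.1 y.1) := by norm_num
  exact le_trans (iInf_le_of_le γ (iInf_le_of_le hlip (iInf_le_of_le h0
    (iInf_le_of_le h1 le_rfl)))) hlen

lemma iInf_le_polyline {h : ℝ} (hh : 0 < h) (x y : ↥Hup) :
    (⨅ (γ : ℝ → ↥Hup) (_ : LipCurve (dOm h) γ) (_ : γ 0 = x) (_ : γ 1 = y),
        pathLength (dOm h) γ) ≤ ENNReal.ofReal (lineCost h x.1 y.1) := by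
  apply ENNReal.le_of_forall_pos_le_add
  intro ε hε _
  have hε' : (0:ℝ) < (ε : ℝ) := hε
  obtain ⟨v, hvmem, hv⟩ := exists_lt_of_csInf_lt (lineSet_nonempty h x.1 y.1)
      (lt_add_of_pos_right (lineCost h x.1 y.1) hε')
  obtain ⟨s, t, rfl⟩ := hvmem
  set A : E2 := pt2 s h with hA
  set B : E2 := pt2 t h with hB
  have hA1 : A 1 = h := pt2_one s h
  have hB1 : B 1 = h := pt2_one t h
  have hApos : 0 < A 1 := by rw [hA1]; exact hh
  have hBpos : 0 < B 1 := by rw [hB1]; exact hh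
  -- the piecewise curve in E2
  set σ : ℝ → E2 := fun u =>
    if u ≤ 1/3 then seg x.1 A (3*u) else if u ≤ 2/3 then seg A B (3*u - 1)
    else seg B y.1 (3*u - 2) with hσ
  have hσmem : ∀ u, 0 < σ u 1 := by
    intro u
    simp only [hσ]
    split_ifs
    · exact seg_mem x.2 hApos _
    · exact seg_mem hApos hBpos _
    · exact seg_mem hBpos y.2 _
  set γ : ℝ → ↥Hup := fun u => ⟨σ u, hσmem u⟩ with hγ
  have hv1 : ∀ u : ℝ, u ≤ 1/3 → σ u = seg x.1 A (3*u) := by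
    intro u hu; simp only [hσ]; rw [if_pos hu]
  have hv2 : ∀ u : ℝ, 1/3 ≤ u → u ≤ 2/3 → σ u = seg A B (3*u - 1) := by
    intro u hu1 hu2
    rcases le_or_gt u (1/3) with hc | hc
    · have he : u = 1/3 := le_antisymm hc hu1
      subst he
      simp only [hσ]
      rw [if_pos le_rfl, show (3:ℝ)*(1/3) - 1 = 0 by norm_num,
        show (3:ℝ)*(1/3) = 1 by norm_num, seg_one, seg_zero]
    · simp only [hσ]; rw [if_neg (not_le.2 hc), if_pos hu2]
  have hv3 : ∀ u : ℝ, 2/3 ≤ u → σ u = seg B y.1 (3*u - 2) := by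
    intro u hu
    rcases le_or_gt u (2/3) with hc | hc
    · have he : u = 2/3 := le_antisymm hc hu
      subst he
      simp only [hσ]
      rw [if_neg (by norm_num), if_pos le_rfl,
        show (3:ℝ)*(2/3) - 2 = 0 by norm_num, show (3:ℝ)*(2/3) - 1 = 1 by norm_num,
        seg_one, seg_zero]
    · simp only [hσ]
      rw [if_neg (not_le.2 (by linarith)), if_neg (not_le.2 hc)]
  have hp1 : ∀ a b : ℝ, 0 ≤ a → a ≤ b → b ≤ 1/3 →
      dist (σ b) (σ a) ≤ 3*(dist x.1 A)*(b - a) := by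
    intro a b ha hab hb
    rw [hv1 a (le_trans hab hb), hv1 b hb, dist_seg_seg,
      clamp_of_mem (by linarith) (by linarith), clamp_of_mem (by linarith) (by linarith),
      abs_of_nonneg (by linarith)]
    apply le_of_eq; ring
  have hp2 : ∀ a b : ℝ, 1/3 ≤ a → a ≤ b → b ≤ 2/3 →
      dist (σ b) (σ a) ≤ 3*(dist A B)*(b - a) := by
    intro a b ha hab hb
    rw [hv2 a ha (le_trans hab hb), hv2 b (le_trans ha hab) hb, dist_seg_seg,
      clamp_of_mem (by linarith) (by linarith), clamp_of_mem (by linarith) (by linarith),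
      abs_of_nonneg (by linarith)]
    apply le_of_eq; ring
  have hp3 : ∀ a b : ℝ, 2/3 ≤ a → a ≤ b → b ≤ 1 →
      dist (σ b) (σ a) ≤ 3*(dist B y.1)*(b - a) := by
    intro a b ha hab hb
    rw [hv3 a ha, hv3 b (le_trans ha hab), dist_seg_seg,
      clamp_of_mem (by linarith) (by linarith), clamp_of_mem (by linarith) (by linarith),
      abs_of_nonneg (by linarith)]
    apply le_of_eq; ring
  have hγ0 : γ 0 = x := by
    apply Subtype.ext
    show σ 0 = x.1
    rw [hv1 0 (by norm_num), mul_zero, seg_zero]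
  have hγ1 : γ 1 = y := by
    apply Subtype.ext
    show σ 1 = y.1
    rw [hv3 1 (by norm_num), show (3:ℝ)*1 - 2 = 1 by norm_num, seg_one]
  have hglob : ∀ a b : ℝ, 0 ≤ a → a ≤ b → b ≤ 1 →
      dist (σ b) (σ a) ≤ (3*(dist x.1 A + dist A B + dist B y.1))*(b - a) := by
    intro a b ha hab hb
    set m1 := max a (min (1/3) b) with hm1
    set m2 := max a (min (2/3) b) with hm2
    have h1a : a ≤ m1 := le_max_left _ _
    have h12 : m1 ≤ m2 := max_le_max le_rfl (min_le_min (by norm_num) le_rfl)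
    have h2b : m2 ≤ b := max_le hab (min_le_right _ _)
    have c1 : dist (σ m1) (σ a) ≤ 3*(dist x.1 A)*(m1 - a) := by
      rcases le_or_gt a (1/3) with hc | hc
      · exact hp1 a m1 ha h1a (max_le hc (min_le_left _ _))
      · have he : m1 = a := le_antisymm (max_le le_rfl (le_trans (min_le_left _ _) hc.le)) h1a
        rw [he, dist_self, sub_self, mul_zero]
    have c2 : dist (σ m2) (σ m1) ≤ 3*(dist A B)*(m2 - m1) := by
      rcases le_or_gt b (1/3) with hc | hc
      · have e1 : m1 = b := by rw [hm1, min_eq_right hc, max_eq_right hab]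
        have e2 : m2 = b := by
          rw [hm2, min_eq_right (le_trans hc (by norm_num)), max_eq_right hab]
        rw [e1, e2, dist_self, sub_self, mul_zero]
      · rcases le_or_gt a (2/3) with hc' | hc'
        · refine hp2 m1 m2 ?_ h12 ?_
          · rw [hm1]
            exact le_trans (le_min le_rfl hc.le) (le_max_right _ _)
          · rw [hm2]
            exact max_le hc' (min_le_left _ _)
        · have e1 : m1 = a :=
            le_antisymm (max_le le_rfl (le_trans (min_le_left _ _) (by linarith))) h1a
          have e2 : m2 = a :=
            le_antisymm (max_le le_rfl (le_trans (min_le_left _ _) hc'.le)) (le_max_left _ _)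
          rw [e1, e2, dist_self, sub_self, mul_zero]
    have c3 : dist (σ b) (σ m2) ≤ 3*(dist B y.1)*(b - m2) := by
      rcases le_or_gt b (2/3) with hc | hc
      · have e2 : m2 = b := by rw [hm2, min_eq_right hc, max_eq_right hab]
        rw [e2, dist_self, sub_self, mul_zero]
      · refine hp3 m2 b ?_ h2b hb
        rw [hm2]
        exact le_trans (le_min le_rfl hc.le) (le_max_right _ _)
    have tri := dist_triangle4 (σ b) (σ m2) (σ m1) (σ a)
    have hd1 : (0:ℝ) ≤ dist x.1 A := dist_nonneg
    have hd2 : (0:ℝ) ≤ dist A B := dist_nonneg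
    have hd3 : (0:ℝ) ≤ dist B y.1 := dist_nonneg
    have g1 : 3*(dist x.1 A)*(m1 - a) ≤ 3*(dist x.1 A)*(b - a) :=
      mul_le_mul_of_nonneg_left (by linarith) (by linarith)
    have g2 : 3*(dist A B)*(m2 - m1) ≤ 3*(dist A B)*(b - a) :=
      mul_le_mul_of_nonneg_left (by linarith) (by linarith)
    have g3 : 3*(dist B y.1)*(b - m2) ≤ 3*(dist B y.1)*(b - a) :=
      mul_le_mul_of_nonneg_left (by linarith) (by linarith)
    have expand : 3*(dist x.1 A)*(b-a) + 3*(dist A B)*(b-a) + 3*(dist B y.1)*(b-a)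
        = (3*(dist x.1 A + dist A B + dist B y.1))*(b-a) := by ring
    linarith
  have hlip : LipCurve (dOm h) γ := by
    refine ⟨3*(dist x.1 A + dist A B + dist B y.1), fun a ha b hb => ?_⟩
    have hbase : dOm h (γ a) (γ b) ≤ dist (σ a) (σ b) := dOm_le_dist h _ _
    rcases le_total a b with hab | hab
    · have hg := hglob a b ha.1 hab hb.2
      rw [dist_comm (σ b) (σ a)] at hg
      calc dOm h (γ a) (γ b) ≤ dist (σ a) (σ b) := hbase
        _ ≤ (3*(dist x.1 A + dist A B + dist B y.1))*(b - a) := hg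
        _ = (3*(dist x.1 A + dist A B + dist B y.1))*|a - b| := by
            rw [abs_sub_comm, abs_of_nonneg (by linarith)]
    · have hg := hglob b a hb.1 hab ha.2
      calc dOm h (γ a) (γ b) ≤ dist (σ a) (σ b) := hbase
        _ ≤ (3*(dist x.1 A + dist A B + dist B y.1))*(a - b) := hg
        _ = (3*(dist x.1 A + dist A B + dist B y.1))*|a - b| := by
            rw [abs_of_nonneg (by linarith)]
  have dtri : ∀ u v w : ↥Hup, dOm h u w ≤ dOm h u v + dOm h v w :=
    fun u v w => dmin_triangle h _ _ _
  have hsplit1 := pathLengthOn_split (dOm h) γ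
    (show (0:ℝ) ≤ 1/3 by norm_num) (show (1:ℝ)/3 ≤ 1 by norm_num) dtri
  have hsplit2 := pathLengthOn_split (dOm h) γ
    (show (1:ℝ)/3 ≤ 2/3 by norm_num) (show (2:ℝ)/3 ≤ 1 by norm_num) dtri
  have hb1 : pathLengthOn (dOm h) γ 0 (1/3) ≤ ENNReal.ofReal (3*(dist x.1 A)*(1/3 - 0)) :=
    pathLengthOn_le_of_bound _ _ (mul_nonneg (by norm_num) dist_nonneg)
      (fun a b ha hab hb => le_trans (dOm_le_dist h _ _) (hp1 a b ha hab hb))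
  have honline : ∀ a b : ℝ, 1/3 ≤ a → a ≤ b → b ≤ 2/3 →
      dOm h (γ b) (γ a) ≤ ((3/2) * dist A B)*(b - a) := by
    intro a b ha hab hb
    have hcoord : ∀ u : ℝ, 1/3 ≤ u → u ≤ 2/3 → (σ u) 1 = h := by
      intro u h1 h2
      rw [hv2 u h1 h2, seg_apply1, hA1, hB1]
      ring
    have hγab : dOm h (γ b) (γ a) ≤ 2⁻¹ * dist (σ b) (σ a) := by
      refine le_trans (dOm_le_lineCost h _ _) (lineCost_le_half _ _ ?_ ?_)
      · exact hcoord b (le_trans ha hab) hb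
      · exact hcoord a ha (le_trans hab hb)
    have hps := hp2 a b ha hab hb
    calc dOm h (γ b) (γ a) ≤ 2⁻¹ * dist (σ b) (σ a) := hγab
      _ ≤ 2⁻¹ * (3*(dist A B)*(b - a)) := by linarith
      _ = ((3/2) * dist A B)*(b - a) := by ring
  have hb2 : pathLengthOn (dOm h) γ (1/3) (2/3)
      ≤ ENNReal.ofReal (((3/2) * dist A B)*(2/3 - 1/3)) :=
    pathLengthOn_le_of_bound _ _ (mul_nonneg (by norm_num) dist_nonneg) honline
  have hb3 : pathLengthOn (dOm h) γ (2/3) 1 ≤ ENNReal.ofReal (3*(dist B y.1)*(1 - 2/3)) :=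
    pathLengthOn_le_of_bound _ _ (mul_nonneg (by norm_num) dist_nonneg)
      (fun a b ha hab hb => le_trans (dOm_le_dist h _ _) (hp3 a b ha hab hb))
  have e1 : (3:ℝ)*(dist x.1 A)*(1/3 - 0) = dist x.1 A := by ring
  have e2 : ((3:ℝ)/2 * dist A B)*(2/3 - 1/3) = 2⁻¹ * dist A B := by ring
  have e3 : (3:ℝ)*(dist B y.1)*(1 - 2/3) = dist B y.1 := by ring
  rw [e1] at hb1
  rw [e2] at hb2
  rw [e3] at hb3
  have hsum : pathLength (dOm h) γ ≤
      ENNReal.ofReal (dist x.1 A + 2⁻¹ * dist A B + dist B y.1) := by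
    calc pathLength (dOm h) γ = pathLengthOn (dOm h) γ 0 1 := rfl
      _ ≤ pathLengthOn (dOm h) γ 0 (1/3) + pathLengthOn (dOm h) γ (1/3) 1 := hsplit1
      _ ≤ pathLengthOn (dOm h) γ 0 (1/3) +
          (pathLengthOn (dOm h) γ (1/3) (2/3) + pathLengthOn (dOm h) γ (2/3) 1) :=
            add_le_add_right hsplit2 _
      _ ≤ ENNReal.ofReal (dist x.1 A) +
          (ENNReal.ofReal (2⁻¹ * dist A B) + ENNReal.ofReal (dist B y.1)) :=
            add_le_add hb1 (add_le_add hb2 hb3)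
      _ = ENNReal.ofReal (dist x.1 A + 2⁻¹ * dist A B + dist B y.1) := by
          rw [← ENNReal.ofReal_add (mul_nonneg (by norm_num) dist_nonneg) dist_nonneg,
            ← ENNReal.ofReal_add dist_nonneg
              (add_nonneg (mul_nonneg (by norm_num) dist_nonneg) dist_nonneg)]
          congr 1
          ring
  refine le_trans (le_trans (iInf_le_of_le γ (iInf_le_of_le hlip (iInf_le_of_le hγ0
    (iInf_le_of_le hγ1 le_rfl)))) hsum) ?_
  calc ENNReal.ofReal (dist x.1 A + 2⁻¹ * dist A B + dist B y.1)
      ≤ ENNReal.ofReal (lineCost h x.1 y.1 + (ε:ℝ)) := ENNReal.ofReal_le_ofReal hv.le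
    _ = ENNReal.ofReal (lineCost h x.1 y.1) + ENNReal.ofReal ((ε:ℝ)) :=
        ENNReal.ofReal_add (lineCost_nonneg h x.1 y.1) (by positivity)
    _ = ENNReal.ofReal (lineCost h x.1 y.1) + ε := by rw [ENNReal.ofReal_coe_nnreal]

lemma isLength_dOm {h : ℝ} (hh : 0 < h) : IsLengthDist (dOm h) := by
  intro x y
  apply le_antisymm (le_iInf_pathLength h x y)
  rcases le_total (dist x.1 y.1) (lineCost h x.1 y.1) with hc | hc
  · have e : dOm h x y = dist x.1 y.1 := min_eq_left hc
    rw [e]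
    exact iInf_le_straight h x y
  · have e : dOm h x y = lineCost h x.1 y.1 := min_eq_right hc
    rw [e]
    exact iInf_le_polyline hh x y

lemma memD_dOm {h : ℝ} (hh : 0 < h) : MemD 2 Hup (dOm h) := by
  refine ⟨⟨fun x y => dOm_comm h x y, fun x y z => dmin_triangle h _ _ _, fun x y => ?_⟩,
    isLength_dOm hh, fun x y => ⟨?_, ?_⟩⟩
  · constructor
    · intro h0
      have h1 := half_dist_le_dmin h x.1 y.1
      rw [show dmin h x.1 y.1 = dOm h x y from rfl, h0] at h1
      have h2 : dist x.1 y.1 ≤ 0 := by linarith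
      exact Subtype.ext (by rwa [← dist_le_zero])
    · rintro rfl
      have h1 := dmin_le_dist h x.1 x.1
      rw [dist_self] at h1
      exact le_antisymm h1 (dmin_nonneg h _ _)
  · exact half_dist_le_dmin h x.1 y.1
  · have h1 : dOm h x y ≤ dist x.1 y.1 := dmin_le_dist h x.1 y.1
    have h2 : (0:ℝ) ≤ dist x.1 y.1 := dist_nonneg
    show dOm h x y ≤ 2 * dist x.1 y.1
    linarith

def hseq (n : ℕ) : ℝ := 1/(n+1)
lemma hseq_pos (n : ℕ) : 0 < hseq n := by
  unfold hseq
  positivity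

def dSeq (n : ℕ) : ↥Hup → ↥Hup → ℝ := dOm (hseq n)
def dLim : ↥Hup → ↥Hup → ℝ := dOm 0

lemma dSeq_close (n : ℕ) (x y : ↥Hup) : |dSeq n x y - dLim x y| ≤ 2 * hseq n :=
  dmin_shift (hseq_pos n).le x.1 y.1

lemma not_length_dLim : ¬ IsLengthDist dLim := by
  intro hL
  have hPmem : pt2 0 1 ∈ Hup := by
    show (0:ℝ) < pt2 0 1 1
    rw [pt2_one]
    norm_num
  have hQmem : pt2 8 1 ∈ Hup := by
    show (0:ℝ) < pt2 8 1 1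
    rw [pt2_one]
    norm_num
  set xs : ↥Hup := ⟨pt2 0 1, hPmem⟩ with hxs
  set ys : ↥Hup := ⟨pt2 8 1, hQmem⟩ with hys
  have hPQ : dist xs.1 ys.1 = 8 := by
    show dist (pt2 0 1) (pt2 8 1) = 8
    rw [dist_pt2_horiz]
    norm_num
  have hub : dLim xs ys ≤ 6 := by
    have h1 := lineCost_le 0 xs.1 ys.1 0 8
    have e1 : dist xs.1 (pt2 0 0) = 1 := by
      show dist (pt2 0 1) (pt2 0 0) = 1
      rw [dist_pt2_vert]
      norm_num
    have e2 : dist (pt2 0 0) (pt2 8 0) = 8 := by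
      rw [dist_pt2_horiz]
      norm_num
    have e3 : dist (pt2 8 0) ys.1 = 1 := by
      show dist (pt2 8 0) (pt2 8 1) = 1
      rw [dist_pt2_vert]
      norm_num
    have h2 : lineCost 0 xs.1 ys.1 ≤ 6 := by
      rw [e1, e2, e3] at h1
      linarith
    exact le_trans (dOm_le_lineCost 0 xs ys) h2
  have key : ∀ γ : ℝ → ↥Hup, LipCurve dLim γ → γ 0 = xs → γ 1 = ys →
      ENNReal.ofReal 8 ≤ pathLength dLim γ := by
    intro γ hlip h0 h1
    obtain ⟨K, hK⟩ := hlip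
    have hdist_le : ∀ s t : ℝ, s ∈ Icc (0:ℝ) 1 → t ∈ Icc (0:ℝ) 1 →
        dist (γ s).1 (γ t).1 ≤ 2*K*|s - t| := by
      intro s t hs ht
      have ha := hK s hs t ht
      have hb : 2⁻¹ * dist (γ s).1 (γ t).1 ≤ dLim (γ s) (γ t) :=
        half_dist_le_dmin 0 (γ s).1 (γ t).1
      linarith
    have hKpos : 0 < K := by
      by_contra hneg
      push_neg at hneg
      have h8 : dist (γ 0).1 (γ 1).1 = 8 := by rw [h0, h1]; exact hPQ
      have hd := hdist_le 0 1 (by constructor <;> norm_num) (by constructor <;> norm_num)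
      rw [h8] at hd
      have habs : |(0:ℝ) - 1| = 1 := by norm_num
      rw [habs] at hd
      nlinarith
    set Yf : ℝ → ℝ := fun u => ((γ u) : E2) 1 with hYf
    have hYcont : ContinuousOn Yf (Icc 0 1) := by
      have hlip' : LipschitzOnWith (2*K).toNNReal Yf (Icc 0 1) := by
        apply LipschitzOnWith.of_dist_le_mul
        intro a ha b hb
        rw [Real.coe_toNNReal _ (by linarith)]
        rw [Real.dist_eq, Real.dist_eq]
        calc |Yf a - Yf b| ≤ dist (γ a).1 (γ b).1 := abs_coord_le_dist _ _ 1
          _ ≤ 2*K*|a - b| := hdist_le a b ha hb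
      exact hlip'.continuousOn
    obtain ⟨t₀, ht₀, hmin⟩ := isCompact_Icc.exists_isMinOn
      (⟨0, Set.left_mem_Icc.2 zero_le_one⟩) hYcont
    have hδ : 0 < Yf t₀ := (γ t₀).2
    obtain ⟨m, hm⟩ := exists_nat_gt (2*K/(Yf t₀))
    set k := m + 1 with hk
    have hk0 : (0:ℝ) < (k:ℝ) := by positivity
    have hkk : 2*K/(k:ℝ) ≤ Yf t₀ := by
      rw [div_le_iff₀ hk0]
      have hmk : 2*K/(Yf t₀) < (k:ℝ) := by
        apply lt_of_lt_of_le hm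
        exact_mod_cast Nat.le_succ m
      rw [div_lt_iff₀ hδ] at hmk
      nlinarith
    set tt : Fin (k+1) → ℝ := fun i => (i : ℕ) / (k:ℝ) with htt
    have httmono : Monotone tt := by
      intro i j hij
      have hval : ((i:ℕ):ℝ) ≤ ((j:ℕ):ℝ) := by exact_mod_cast hij
      simp only [htt]
      gcongr
    have htt0 : tt 0 = 0 := by simp [htt]
    have httl : tt (Fin.last k) = 1 := by
      simp only [htt, Fin.val_last]
      exact div_self (ne_of_gt hk0)
    have httmem : ∀ i : Fin (k+1), tt i ∈ Icc (0:ℝ) 1 := by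
      intro i
      constructor
      · positivity
      · simp only [htt]
        rw [div_le_one hk0]
        exact_mod_cast Fin.is_le i
    have hstep : ∀ i : Fin k, dist (γ (tt i.succ)).1 (γ (tt i.castSucc)).1 ≤ Yf t₀ := by
      intro i
      have hd := hdist_le (tt i.succ) (tt i.castSucc) (httmem _) (httmem _)
      have habs : |tt i.succ - tt i.castSucc| = 1/(k:ℝ) := by
        rw [abs_of_nonneg (sub_nonneg.2 (httmono (Fin.castSucc_le_succ i)))]
        simp only [htt, Fin.val_succ, Fin.coe_castSucc]
        push_cast
        rw [div_sub_div_same]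
        norm_num
      rw [habs] at hd
      calc dist (γ (tt i.succ)).1 (γ (tt i.castSucc)).1 ≤ 2*K*(1/(k:ℝ)) := hd
        _ = 2*K/(k:ℝ) := by ring
        _ ≤ Yf t₀ := hkk
    have hterm : ∀ i : Fin k, dLim (γ (tt i.succ)) (γ (tt i.castSucc))
        = dist (γ (tt i.succ)).1 (γ (tt i.castSucc)).1 := by
      intro i
      have hU : Yf t₀ ≤ ((γ (tt i.succ)) : E2) 1 := hmin (httmem _)
      have hV : Yf t₀ ≤ ((γ (tt i.castSucc)) : E2) 1 := hmin (httmem _)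
      have hs := hstep i
      have hvu : dLim (γ (tt i.succ)) (γ (tt i.castSucc))
          = min (dist (γ (tt i.succ)).1 (γ (tt i.castSucc)).1)
            (lineCost 0 (γ (tt i.succ)).1 (γ (tt i.castSucc)).1) := rfl
      rw [hvu]
      apply min_eq_left
      apply dist_le_lineCost_zero
      linarith
    have hchain := dist_le_chain k (fun i => (γ (tt i)).1)
    have hl8 : dist ((γ (tt (Fin.last k))) : E2) ((γ (tt 0)) : E2) = 8 := by
      rw [htt0, httl, h0, h1, dist_comm]
      exact hPQ
    have hsum2 : ENNReal.ofReal 8 ≤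
        ∑ i : Fin k, ENNReal.ofReal (dLim (γ (tt i.succ)) (γ (tt i.castSucc))) := by
      have e : ∑ i : Fin k, ENNReal.ofReal (dLim (γ (tt i.succ)) (γ (tt i.castSucc)))
          = ENNReal.ofReal (∑ i : Fin k, dist (γ (tt i.succ)).1 (γ (tt i.castSucc)).1) := by
        rw [ENNReal.ofReal_sum_of_nonneg (fun i _ => dist_nonneg)]
        exact Finset.sum_congr rfl (fun i _ => by rw [hterm i])
      rw [e]
      apply ENNReal.ofReal_le_ofReal
      exact le_trans (le_of_eq hl8.symm) hchain
    have hle_path : (∑ i : Fin k, ENNReal.ofReal (dLim (γ (tt i.succ)) (γ (tt i.castSucc))))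
        ≤ pathLength dLim γ :=
      le_iSup_of_le k (le_iSup_of_le tt (le_iSup_of_le httmono
        (le_iSup_of_le htt0 (le_iSup_of_le httl le_rfl))))
    exact le_trans hsum2 hle_path
  have heq := hL xs ys
  have hge : ENNReal.ofReal 8 ≤ ENNReal.ofReal (dLim xs ys) := by
    rw [heq]
    exact le_iInf fun γ => le_iInf fun hl => le_iInf fun h0 => le_iInf fun h1 => key γ hl h0 h1
  have h8 : (8:ℝ) ≤ dLim xs ys := by
    have hnn : (0:ℝ) ≤ dLim xs ys := dmin_nonneg 0 xs.1 ys.1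
    exact (ENNReal.ofReal_le_ofReal_iff hnn).1 hge
  linarith

end
end Stmt12Aux

open Stmt12Aux in
/-- there is an open set `Ω ⊆ ℝ²` with `𝒟₂(Ω) ≠ ∅` which is not
sequentially compact: some sequence in `𝒟₂(Ω)` has no subsequence converging,
uniformly on compact subsets of `Ω × Ω`, to an element of `𝒟₂(Ω)`. -/
theorem stmt12 :
    ∃ Ω : Set (EuclideanSpace ℝ (Fin 2)), IsOpen Ω ∧
      (∃ d : Ω → Ω → ℝ, MemD 2 Ω d) ∧
      ∃ dn : ℕ → Ω → Ω → ℝ, (∀ n, MemD 2 Ω (dn n)) ∧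
        ∀ φ : ℕ → ℕ, StrictMono φ → ∀ e : Ω → Ω → ℝ, MemD 2 Ω e →
          ¬ TendstoUnifCompactly (fun i => dn (φ i)) e := by
  classical
  refine ⟨Hup, isOpen_Hup, ⟨dSeq 0, memD_dOm (hseq_pos 0)⟩, dSeq,
    fun n => memD_dOm (hseq_pos n), ?_⟩
  intro φ hφ e he hconv
  have he_eq : ∀ x y : ↥Hup, e x y = dLim x y := by
    intro x y
    by_contra hne
    have hεpos : 0 < |e x y - dLim x y| := abs_pos.2 (sub_ne_zero.2 hne)
    obtain ⟨N, hN⟩ := hconv {(x, y)} isCompact_singleton (|e x y - dLim x y|/2) (by linarith)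
    obtain ⟨M, hM⟩ := exists_nat_gt (4/|e x y - dLim x y|)
    set n := max N M with hn
    have h1 : |dSeq (φ n) x y - e x y| < |e x y - dLim x y|/2 :=
      hN n (le_max_left _ _) (x, y) (Set.mem_singleton _)
    have h2 := dSeq_close (φ n) x y
    have h3 : 2 * hseq (φ n) < |e x y - dLim x y|/2 := by
      have hφn : (M:ℝ) ≤ (φ n : ℝ) := by
        exact_mod_cast le_trans (le_max_right N M) hφ.le_apply
      have hpos : (0:ℝ) < (φ n : ℝ) + 1 := by positivity
      have h4 : 4/|e x y - dLim x y| < (φ n : ℝ) + 1 := by linarith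
      rw [div_lt_iff₀ hεpos] at h4
      unfold hseq
      rw [show (2:ℝ) * (1/((φ n : ℝ) + 1)) = 2/((φ n:ℝ)+1) by ring,
        div_lt_div_iff₀ hpos (by norm_num : (0:ℝ) < 2)]
      linarith
    have h5 : |e x y - dLim x y| ≤ |e x y - dSeq (φ n) x y| + |dSeq (φ n) x y - dLim x y| :=
      abs_sub_le _ _ _
    rw [abs_sub_comm (e x y) (dSeq (φ n) x y)] at h5
    linarith
  have hfun : e = dLim := funext fun x => funext fun y => he_eq x y
  rw [hfun] at he
  exact not_length_dLim he.2.1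
end
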